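/- arXiv:2208.04830 — 7 statements merged into one kernel-verified Lean document; each statement's English description precedes it below -/
import Mathlib

section
/- Let q be an odd prime power, d ≥ 2, and let E ⊆ 𝔽_q^d. If |E| > q^{(d+1)/2}, then every nonzero element of 𝔽_q lies in the dot product set ∏(E); that is, 𝔽_q \ {0} ⊆ ∏(E). -/
set_option linter.unusedSectionVars false
set_option maxHeartbeats 1000000


open Finset

/-- Dot product `x·y = x₁y₁ + ⋯ + xₙyₙ` on `𝔽_q^n`. -/
def dotP {F : Type*} [CommRing F] {n : ℕ} (x y : Fin n → F) : F := ∑ i, x i * y i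

/-- The "norm" `‖x‖ = x₁² + ⋯ + xₙ²` on `𝔽_q^n`. -/
def nrm {F : Type*} [CommRing F] {n : ℕ} (x : Fin n → F) : F := ∑ i, x i * x i

/-- The sphere `S_r = {x ∈ 𝔽_q^n : ‖x‖ = r}`. -/
def sph (F : Type*) [CommRing F] [Fintype F] [DecidableEq F] (n : ℕ) (r : F) :
    Finset (Fin n → F) := Finset.univ.filter fun x => nrm x = r

/-- The dot product set `∏(E) = {x·y : x, y ∈ E}`. -/
def prodSet {F : Type*} [CommRing F] [DecidableEq F] {n : ℕ} (E : Finset (Fin n → F)) :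
    Finset F := (E ×ˢ E).image fun p => dotP p.1 p.2

/-- Fourier transform of the indicator function of `X`:
`X̂(m) = q^{-n} ∑_{x ∈ X} χ(-x·m)`. -/
noncomputable def fourierCoef {F : Type*} [CommRing F] [Fintype F] {n : ℕ}
    (χ : AddChar F ℂ) (X : Finset (Fin n → F)) (m : Fin n → F) : ℂ :=
  ((Fintype.card F : ℂ) ^ n)⁻¹ * ∑ x ∈ X, χ (-(dotP x m))

section aux
variable {F : Type*} [Field F] [Fintype F] [DecidableEq F]

lemma norm_addChar (χ : AddChar F ℂ) (a : F) : ‖χ a‖ = 1 := by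
  have h : χ a ^ Fintype.card F = 1 := by
    rw [← AddChar.map_nsmul_eq_pow, card_nsmul_eq_zero, AddChar.map_zero_eq_one]
  have h2 : ‖χ a‖ ^ Fintype.card F = 1 := by rw [← norm_pow, h, norm_one]
  have hc : Fintype.card F ≠ 0 := Fintype.card_ne_zero
  rcases lt_trichotomy ‖χ a‖ 1 with hl | he | hg
  · exact absurd h2 (by simpa using (pow_lt_one₀ (norm_nonneg _) hl hc).ne)
  · exact he
  · exact absurd h2 (by simpa using (one_lt_pow₀ hg hc).ne')

lemma conj_addChar (χ : AddChar F ℂ) (a : F) : (starRingEnd ℂ) (χ a) = χ (-a) := by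
  have h1 : χ a * χ (-a) = 1 := by
    rw [← AddChar.map_add_eq_mul, add_neg_cancel, AddChar.map_zero_eq_one]
  rw [← Complex.inv_eq_conj (norm_addChar χ a)]
  exact (eq_inv_of_mul_eq_one_right h1).symm

lemma sum_char_mul (χ : AddChar F ℂ) (hχ : χ ≠ 1) (a : F) :
    ∑ s : F, χ (s * a) = if a = 0 then (Fintype.card F : ℂ) else 0 := by
  split_ifs with h
  · subst h
    simp [AddChar.map_zero_eq_one]
  · have hp : χ.mulShift a ≠ 1 := AddChar.IsPrimitive.of_ne_one hχ h
    have := AddChar.sum_eq_zero_of_ne_one hp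
    simpa [AddChar.mulShift_apply, mul_comm] using this

lemma sum_char_mul_erase (χ : AddChar F ℂ) (hχ : χ ≠ 1) (a : F) :
    ∑ s ∈ Finset.univ.erase (0:F), χ (s * a)
      = (if a = 0 then (Fintype.card F : ℂ) else 0) - 1 := by
  have h := sum_char_mul χ hχ a
  rw [← Finset.add_sum_erase _ _ (Finset.mem_univ (0:F)), zero_mul,
    AddChar.map_zero_eq_one] at h
  linear_combination h

def dotHom {d : ℕ} (v : Fin d → F) : (Fin d → F) →+ F where
  toFun x := dotP x v
  map_zero' := by simp [dotP]
  map_add' x y := by simp [dotP, add_mul, Finset.sum_add_distrib]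

lemma sum_char_dot {d : ℕ} (χ : AddChar F ℂ) (hχ : χ ≠ 1) (v : Fin d → F) :
    ∑ x : Fin d → F, χ (dotP x v)
      = if v = 0 then ((Fintype.card F : ℂ) ^ d) else 0 := by
  split_ifs with h
  · subst h
    simp only [dotP, Pi.zero_apply, mul_zero, Finset.sum_const_zero,
      AddChar.map_zero_eq_one, Finset.sum_const, Finset.card_univ, nsmul_eq_mul, mul_one]
    simp [Fintype.card_fun]
  · have hne : (χ.compAddMonoidHom (dotHom v)) ≠ 1 := by
      obtain ⟨i, hi⟩ := Function.ne_iff.mp h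
      simp only [Pi.zero_apply] at hi
      obtain ⟨b, hb⟩ := AddChar.ne_one_iff.mp hχ
      rw [AddChar.ne_one_iff]
      refine ⟨Pi.single i (b * (v i)⁻¹), ?_⟩
      have hd : dotP (Pi.single i (b * (v i)⁻¹)) v = b := by
        rw [dotP, Finset.sum_eq_single i]
        · rw [Pi.single_eq_same]
          field_simp [hi]
        · intro j _ hj
          rw [Pi.single_eq_of_ne hj, zero_mul]
        · intro hmem
          exact absurd (Finset.mem_univ i) hmem
      change χ (dotP (Pi.single i (b * (v i)⁻¹)) v) ≠ 1
      rw [hd]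
      exact hb
    have := AddChar.sum_eq_zero_of_ne_one hne
    exact this

lemma dotP_smul_sub {d : ℕ} (x y y' : Fin d → F) (s s' : F) :
    dotP x (s • y - s' • y') = s * dotP x y - s' * dotP x y' := by
  unfold dotP
  rw [Finset.mul_sum, Finset.mul_sum, ← Finset.sum_sub_distrib]
  refine Finset.sum_congr rfl fun i _ => ?_
  simp only [Pi.sub_apply, Pi.smul_apply, smul_eq_mul]
  ring

end aux


/-- if `q` is an odd prime power, `d ≥ 2`, `E ⊆ 𝔽_q^d` and
`|E| > q^{(d+1)/2}`, then `𝔽_q \ {0} ⊆ ∏(E)`. -/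
theorem stmt0 (F : Type*) [Field F] [Fintype F] [DecidableEq F]
    (hodd : Odd (Fintype.card F)) (d : ℕ) (hd : 2 ≤ d)
    (E : Finset (Fin d → F))
    (hE : (Fintype.card F : ℝ) ^ (((d : ℝ) + 1) / 2) < (E.card : ℝ)) :
    ∀ t : F, t ≠ 0 → t ∈ prodSet E := by
  classical
  intro t ht
  obtain ⟨χ, hχa⟩ := (AddChar.exists_apply_ne_zero (a := (1:F))).mpr one_ne_zero
  have hχ : χ ≠ 1 := AddChar.ne_one_iff.mpr ⟨1, hχa⟩
  set q : ℕ := Fintype.card F with hq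
  have hq1 : 1 ≤ (q:ℝ) := by exact_mod_cast Fintype.card_pos
  set S : Finset F := Finset.univ.erase 0 with hS
  set P := (E ×ˢ E).filter (fun p => dotP p.1 p.2 = t) with hP
  suffices hN : 0 < P.card by
    obtain ⟨p, hp⟩ := Finset.card_pos.mp hN
    rw [hP, Finset.mem_filter] at hp
    exact Finset.mem_image.mpr ⟨p, hp.1, hp.2⟩
  set g : (Fin d → F) → ℂ := fun x => ∑ w ∈ E ×ˢ S, χ (w.2 * (dotP x w.1 - t)) with hg
  set R : ℂ := ∑ x ∈ E, g x with hR
  -- the counting identity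
  have key : (q : ℂ) * P.card = (E.card : ℂ)^2 + R := by
    have h1 : ∀ p : (Fin d → F) × (Fin d → F),
        (∑ s : F, χ (s * (dotP p.1 p.2 - t))) = if dotP p.1 p.2 = t then (q:ℂ) else 0 := by
      intro p
      rw [sum_char_mul χ hχ (dotP p.1 p.2 - t)]
      simp [sub_eq_zero, hq]
    calc (q:ℂ) * P.card
        = ∑ p ∈ E ×ˢ E, if dotP p.1 p.2 = t then (q:ℂ) else 0 := by
          rw [← Finset.sum_filter, ← hP, Finset.sum_const, nsmul_eq_mul, mul_comm]
      _ = ∑ p ∈ E ×ˢ E, ∑ s : F, χ (s * (dotP p.1 p.2 - t)) :=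
          Finset.sum_congr rfl fun p _ => (h1 p).symm
      _ = ∑ p ∈ E ×ˢ E, (1 + ∑ s ∈ S, χ (s * (dotP p.1 p.2 - t))) := by
          refine Finset.sum_congr rfl fun p _ => ?_
          rw [hS, ← Finset.add_sum_erase _ _ (Finset.mem_univ (0:F)), zero_mul,
            AddChar.map_zero_eq_one]
      _ = (E.card : ℂ)^2 + R := by
          rw [Finset.sum_add_distrib, Finset.sum_const, Finset.card_product]
          congr 1
          · push_cast
            ring
          · rw [hR, Finset.sum_product]
            refine Finset.sum_congr rfl fun x _ => ?_
            show _ = ∑ w ∈ E ×ˢ S, χ (w.2 * (dotP x w.1 - t))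
            rw [Finset.sum_product]
  -- Cauchy-Schwarz
  have hRle : ‖R‖^2 ≤ (E.card : ℝ) * ∑ x : Fin d → F, ‖g x‖^2 := by
    have h1 : ‖R‖ ≤ ∑ x ∈ E, ‖g x‖ := norm_sum_le _ _
    have h2 : (∑ x ∈ E, ‖g x‖)^2 ≤ (E.card : ℝ) * ∑ x ∈ E, ‖g x‖^2 := by
      exact_mod_cast sq_sum_le_card_mul_sum_sq (s := E) (f := fun x => ‖g x‖)
    have h3 : ∑ x ∈ E, ‖g x‖^2 ≤ ∑ x : Fin d → F, ‖g x‖^2 :=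
      Finset.sum_le_sum_of_subset_of_nonneg (Finset.subset_univ E)
        (fun _ _ _ => sq_nonneg _)
    have h4 : 0 ≤ ∑ x ∈ E, ‖g x‖ := Finset.sum_nonneg fun x _ => norm_nonneg _
    nlinarith [norm_nonneg R]
  -- the second moment bound
  have hSig : ∑ x : Fin d → F, ‖g x‖^2 ≤ (q:ℝ)^d * ((q:ℝ) * E.card) := by
    have hsum : ((∑ x : Fin d → F, ‖g x‖^2 : ℝ) : ℂ)
        = ∑ x : Fin d → F, g x * (starRingEnd ℂ) (g x) := by
      push_cast
      refine Finset.sum_congr rfl fun x _ => ?_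
      rw [Complex.mul_conj]
      norm_cast
      rw [← Complex.sq_norm]
    have hconj : ∀ x : Fin d → F, (starRingEnd ℂ) (g x)
        = ∑ w ∈ E ×ˢ S, χ (-(w.2 * (dotP x w.1 - t))) := by
      intro x
      show (starRingEnd ℂ) (∑ w ∈ E ×ˢ S, χ (w.2 * (dotP x w.1 - t))) = _
      rw [map_sum]
      exact Finset.sum_congr rfl fun w _ => conj_addChar χ _
    have hexp : ∀ x : Fin d → F, g x * (starRingEnd ℂ) (g x)
        = ∑ w ∈ E ×ˢ S, ∑ w' ∈ E ×ˢ S,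
            χ (dotP x (w.2 • w.1 - w'.2 • w'.1)) * χ ((w'.2 - w.2) * t) := by
      intro x
      rw [hconj x]
      show (∑ w ∈ E ×ˢ S, χ (w.2 * (dotP x w.1 - t))) * _ = _
      rw [Finset.sum_mul_sum]
      refine Finset.sum_congr rfl fun w _ => Finset.sum_congr rfl fun w' _ => ?_
      rw [← AddChar.map_add_eq_mul, ← AddChar.map_add_eq_mul]
      congr 1
      rw [dotP_smul_sub]
      ring
    have hx2 : ∑ x : Fin d → F, g x * (starRingEnd ℂ) (g x)
        = (q:ℂ)^d * ∑ w ∈ E ×ˢ S, ∑ w' ∈ E ×ˢ S,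
            (if w.2 • w.1 = w'.2 • w'.1 then χ ((w'.2 - w.2) * t) else 0) := by
      have e1 : ∑ x : Fin d → F, g x * (starRingEnd ℂ) (g x)
          = ∑ x : Fin d → F, ∑ w ∈ E ×ˢ S, ∑ w' ∈ E ×ˢ S,
              χ (dotP x (w.2 • w.1 - w'.2 • w'.1)) * χ ((w'.2 - w.2) * t) :=
        Finset.sum_congr rfl fun x _ => hexp x
      rw [e1, Finset.sum_comm, Finset.mul_sum]
      refine Finset.sum_congr rfl fun w _ => ?_
      rw [Finset.sum_comm, Finset.mul_sum]
      refine Finset.sum_congr rfl fun w' _ => ?_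
      rw [← Finset.sum_mul, sum_char_dot χ hχ, ← hq]
      simp only [sub_eq_zero]
      split_ifs <;> ring
    have hrow : ∀ y : Fin d → F,
        ∑ s ∈ S, ∑ w' ∈ E ×ˢ S, (if s • y = w'.2 • w'.1 then χ ((w'.2 - s) * t) else 0)
        = ∑ μ ∈ S, (if μ • y ∈ E then ((if μ = (1:F) then (q:ℂ) else 0) - 1) else 0) := by
      intro y
      have step1 : ∀ s' ∈ S, ∀ s : F,
          (∑ y' ∈ E, if s • y = s' • y' then χ ((s' - s) * t) else 0)
          = (if (s'⁻¹ * s) • y ∈ E then χ ((s' - s) * t) else 0) := by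
        intro s' hs' s
        have hs'0 : s' ≠ 0 := (Finset.mem_erase.mp hs').1
        have hcond : ∀ y' : Fin d → F, (s • y = s' • y') ↔ ((s'⁻¹ * s) • y = y') := by
          intro y'
          constructor
          · intro h
            rw [mul_smul, h, smul_smul, inv_mul_cancel₀ hs'0, one_smul]
          · intro h
            rw [← h, smul_smul, ← mul_assoc, mul_inv_cancel₀ hs'0, one_mul]
        simp_rw [hcond]
        rw [Finset.sum_ite_eq]
      calc ∑ s ∈ S, ∑ w' ∈ E ×ˢ S, (if s • y = w'.2 • w'.1 then χ ((w'.2 - s) * t) else 0)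
          = ∑ s ∈ S, ∑ y' ∈ E, ∑ s' ∈ S, (if s • y = s' • y' then χ ((s' - s) * t) else 0) := by
            refine Finset.sum_congr rfl fun s _ => ?_
            rw [Finset.sum_product]
        _ = ∑ s ∈ S, ∑ s' ∈ S, ∑ y' ∈ E, (if s • y = s' • y' then χ ((s' - s) * t) else 0) :=
            Finset.sum_congr rfl fun s _ => Finset.sum_comm
        _ = ∑ s' ∈ S, ∑ s ∈ S, (if (s'⁻¹ * s) • y ∈ E then χ ((s' - s) * t) else 0) := by
            rw [Finset.sum_comm]
            exact Finset.sum_congr rfl fun s' hs' =>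
              Finset.sum_congr rfl fun s _ => step1 s' hs' s
        _ = ∑ s' ∈ S, ∑ μ ∈ S, (if μ • y ∈ E then χ (s' * ((1 - μ) * t)) else 0) := by
            refine Finset.sum_congr rfl fun s' hs' => ?_
            have hs'0 : s' ≠ 0 := (Finset.mem_erase.mp hs').1
            refine Finset.sum_nbij' (fun s => s'⁻¹ * s) (fun μ => s' * μ) ?_ ?_ ?_ ?_ ?_
            · intro s hs
              exact Finset.mem_erase.mpr
                ⟨mul_ne_zero (inv_ne_zero hs'0) (Finset.mem_erase.mp hs).1, Finset.mem_univ _⟩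
            · intro μ hμ
              exact Finset.mem_erase.mpr
                ⟨mul_ne_zero hs'0 (Finset.mem_erase.mp hμ).1, Finset.mem_univ _⟩
            · intro s _
              field_simp
            · intro μ _
              field_simp
            · intro s _
              have harg : s' * ((1 - s'⁻¹ * s) * t) = (s' - s) * t := by
                field_simp
              rw [harg]
        _ = ∑ μ ∈ S, ∑ s' ∈ S, (if μ • y ∈ E then χ (s' * ((1 - μ) * t)) else 0) :=
            Finset.sum_comm
        _ = ∑ μ ∈ S, (if μ • y ∈ E then ((if μ = (1:F) then (q:ℂ) else 0) - 1) else 0) := by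
            refine Finset.sum_congr rfl fun μ _ => ?_
            by_cases h1 : μ • y ∈ E
            · simp only [h1, if_true]
              rw [hS, sum_char_mul_erase χ hχ ((1 - μ) * t), ← hq]
              have hc : ((1 - μ) * t = 0) ↔ (μ = 1) := by
                rw [mul_eq_zero, sub_eq_zero]
                simp [ht, eq_comm]
              rw [if_congr hc rfl rfl]
            · simp [h1]
    have hT : ((∑ x : Fin d → F, ‖g x‖^2 : ℝ) : ℂ)
        = (q:ℂ)^d * ∑ y ∈ E, ∑ μ ∈ S,
            (if μ • y ∈ E then ((if μ = (1:F) then (q:ℂ) else 0) - 1) else 0) := by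
      rw [hsum, hx2, Finset.sum_product]
      congr 1
      refine Finset.sum_congr rfl fun y _ => ?_
      have := hrow y
      calc ∑ s ∈ S, ∑ w' ∈ E ×ˢ S,
              (if ((y, s).2 : F) • ((y, s).1 : Fin d → F) = w'.2 • w'.1
                then χ ((w'.2 - (y, s).2) * t) else 0)
          = ∑ s ∈ S, ∑ w' ∈ E ×ˢ S, (if s • y = w'.2 • w'.1 then χ ((w'.2 - s) * t) else 0) :=
            rfl
        _ = _ := hrow y
    -- take real parts
    have hre := congrArg Complex.re hT
    rw [Complex.ofReal_re] at hre
    have hqd : ((q:ℂ)^d) = (((q:ℝ)^d : ℝ) : ℂ) := by push_cast; ring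
    rw [hqd, Complex.re_ofReal_mul] at hre
    rw [hre]
    have hrowR : ∀ y ∈ E,
        (∑ μ ∈ S, (if μ • y ∈ E then ((if μ = (1:F) then (q:ℂ) else 0) - 1) else 0)).re
          ≤ (q:ℝ) := by
      intro y _
      rw [Complex.re_sum]
      calc ∑ μ ∈ S,
              (if μ • y ∈ E then ((if μ = (1:F) then (q:ℂ) else 0) - 1) else 0).re
          ≤ ∑ μ ∈ S, (if μ = (1:F) then (q:ℝ) - 1 else 0) := by
            refine Finset.sum_le_sum fun μ _ => ?_
            split_ifs with h1 h2 h2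
            · simp
            · simp only [Complex.sub_re, Complex.zero_re, Complex.natCast_re, Complex.one_re]
              norm_num
            · simp only [Complex.zero_re]
              linarith
            · simp
        _ ≤ (q:ℝ) := by
            rw [Finset.sum_ite_eq']
            split_ifs <;> linarith
    have hrepos : (∑ y ∈ E, ∑ μ ∈ S,
        (if μ • y ∈ E then ((if μ = (1:F) then (q:ℂ) else 0) - 1) else 0)).re
          ≤ (q:ℝ) * E.card := by
      rw [Complex.re_sum]
      calc ∑ y ∈ E, (∑ μ ∈ S,
              (if μ • y ∈ E then ((if μ = (1:F) then (q:ℂ) else 0) - 1) else 0)).re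
          ≤ ∑ _y ∈ E, (q:ℝ) := Finset.sum_le_sum hrowR
        _ = (q:ℝ) * E.card := by
            rw [Finset.sum_const, nsmul_eq_mul, mul_comm]
    have hqd0 : (0:ℝ) ≤ (q:ℝ)^d := by positivity
    exact mul_le_mul_of_nonneg_left hrepos hqd0
  -- final assembly
  have hkey : (q:ℝ) * P.card = (E.card:ℝ)^2 + R.re := by
    have h := congrArg Complex.re key
    simpa [Complex.add_re, Complex.mul_re, Complex.natCast_re, Complex.natCast_im,
      Complex.sq_norm, pow_two] using h
  have hRre : -‖R‖ ≤ R.re := by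
    have h := Complex.abs_re_le_norm R
    have := (abs_le.mp h).1
    linarith
  have hQpos : (0:ℝ) < (q:ℝ) := by linarith
  have hQh0 : (0:ℝ) ≤ (q:ℝ) ^ (((d:ℝ) + 1) / 2) := Real.rpow_nonneg hQpos.le _
  have ha0 : (0:ℝ) < (E.card:ℝ) := lt_of_le_of_lt hQh0 hE
  have hsq : ((q:ℝ) ^ (((d:ℝ) + 1) / 2))^2 = (q:ℝ)^(d+1) := by
    rw [← Real.rpow_natCast ((q:ℝ) ^ (((d:ℝ) + 1) / 2)) 2, ← Real.rpow_mul hQpos.le]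
    rw [show (((d:ℝ) + 1) / 2) * ((2:ℕ):ℝ) = ((d+1 : ℕ):ℝ) by push_cast; ring]
    exact Real.rpow_natCast _ _
  have hRnorm : ‖R‖ ≤ (E.card:ℝ) * ((q:ℝ) ^ (((d:ℝ) + 1) / 2)) := by
    have h1 : ‖R‖^2 ≤ ((E.card:ℝ) * ((q:ℝ) ^ (((d:ℝ) + 1) / 2)))^2 := by
      have h2 : ‖R‖^2 ≤ (E.card:ℝ) * ((q:ℝ)^d * ((q:ℝ) * E.card)) :=
        le_trans hRle (mul_le_mul_of_nonneg_left hSig ha0.le)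
      have h3 : ((E.card:ℝ) * ((q:ℝ) ^ (((d:ℝ) + 1) / 2)))^2
          = (E.card:ℝ)^2 * (q:ℝ)^(d+1) := by
        rw [mul_pow, hsq]
      rw [h3]
      have h4 : (E.card:ℝ) * ((q:ℝ)^d * ((q:ℝ) * E.card))
          = (E.card:ℝ)^2 * (q:ℝ)^(d+1) := by
        rw [pow_succ]
        ring
      linarith
    calc ‖R‖ = Real.sqrt (‖R‖^2) := (Real.sqrt_sq (norm_nonneg R)).symm
      _ ≤ Real.sqrt (((E.card:ℝ) * ((q:ℝ) ^ (((d:ℝ) + 1) / 2)))^2) := Real.sqrt_le_sqrt h1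
      _ = (E.card:ℝ) * ((q:ℝ) ^ (((d:ℝ) + 1) / 2)) := Real.sqrt_sq (by positivity)
  have hpos : (0:ℝ) < (q:ℝ) * P.card := by
    rw [hkey]
    nlinarith
  have hPpos : (0:ℝ) < (P.card:ℝ) := by
    by_contra hcon
    push_neg at hcon
    nlinarith
  exact_mod_cast hPpos
end

section
/- Let n = 4k + 2 for some positive integer k and let q ≡ 3 (mod 4) be a prime power. Let S₀ = {y ∈ 𝔽_q^n : ||y|| = 0}. Then for every m ∈ 𝔽_q^n, q^{−n} Σ_{y ∈ S₀} χ(m·y) = q^{−1} δ₀(m) − q^{−(n+2)/2} Σ_{r ∈ 𝔽_q \ {0}} χ(r ||m||), where δ₀(m) = 1 if m = (0, …, 0) and δ₀(m) = 0 otherwise. -/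
open Finset

section Aux

open AddChar

set_option linter.unusedSectionVars false

variable {F : Type*} [Field F] [Fintype F] [DecidableEq F]

private lemma addChar_sum {ι : Type*} (χ : AddChar F ℂ) (s : Finset ι) (f : ι → F) :
    χ (∑ i ∈ s, f i) = ∏ i ∈ s, χ (f i) := by
  induction s using Finset.cons_induction with
  | empty => simp
  | cons a s ha ih => rw [Finset.sum_cons, Finset.prod_cons, map_add_eq_mul, ih]

private noncomputable def qc (F : Type*) [Field F] [Fintype F] [DecidableEq F] : MulChar F ℂ :=
  (quadraticChar F).ringHomComp (Int.castRingHom ℂ)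

private lemma qc_ne_one (hF2 : ringChar F ≠ 2) : qc F ≠ 1 :=
  (MulChar.ringHomComp_ne_one_iff (RingHom.injective_int _)).mpr (quadraticChar_ne_one hF2)

private lemma qc_quad : (qc F).IsQuadratic := (quadraticChar_isQuadratic F).comp _

private lemma qc_mul_self {s : F} (hs : s ≠ 0) : qc F s * qc F s = 1 := by
  have e1 : qc F s * qc F s = qc F (s * s) := (map_mul (qc F) s s).symm
  rw [e1, ← sq, qc, MulChar.ringHomComp_apply,
    (quadraticChar_one_iff_isSquare (pow_ne_zero 2 hs)).mpr ⟨s, sq s⟩]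
  simp

private lemma sum_chi_sq (hF2 : ringChar F ≠ 2) (χ : AddChar F ℂ) (hχ : χ ≠ 1) {s : F}
    (hs : s ≠ 0) : ∑ t : F, χ (s * t ^ 2) = qc F s * gaussSum (qc F) χ := by
  have h1 : ∑ t : F, χ (s * t ^ 2) = ∑ u : F, ((quadraticChar F u : ℂ) + 1) * χ (s * u) := by
    rw [← Finset.sum_fiberwise' univ (fun t : F => t ^ 2) (fun u => χ (s * u))]
    refine Finset.sum_congr rfl fun u _ => ?_
    rw [Finset.sum_const]
    have hcard : (#({t : F | t ^ 2 = u} : Set F).toFinset : ℤ) = quadraticChar F u + 1 :=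
      quadraticChar_card_sqrts hF2 u
    simp only [Set.toFinset_setOf] at hcard
    have hc : ((#{t ∈ univ | t ^ 2 = u} : ℕ) : ℂ) = ((quadraticChar F u : ℤ) : ℂ) + 1 := by
      exact_mod_cast congrArg (Int.cast : ℤ → ℂ) hcard
    rw [nsmul_eq_mul, hc]
  rw [h1]
  simp_rw [add_mul, one_mul, Finset.sum_add_distrib]
  have h2 : ∑ u : F, χ (s * u) = 0 := by
    simp_rw [mul_comm s]
    rw [AddChar.sum_mulShift s (IsPrimitive.of_ne_one hχ)]
    simp [hs]
  have h3 : ∑ u : F, (quadraticChar F u : ℂ) * χ (s * u) = qc F s * gaussSum (qc F) χ := by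
    have hb : ∑ x : F, qc F (s * x) * χ (s * x) = gaussSum (qc F) χ := by
      exact Fintype.sum_bijective _ (mulLeft_bijective₀ s hs)
        (fun x => qc F (s * x) * χ (s * x)) (fun v => qc F v * χ v) (fun x => rfl)
    calc ∑ u : F, (quadraticChar F u : ℂ) * χ (s * u)
        = ∑ u : F, qc F s * (qc F (s * u) * χ (s * u)) := by
          refine Finset.sum_congr rfl fun u _ => ?_
          have e1 : (qc F) (s * u) = qc F s * qc F u := map_mul (qc F) s u
          rw [e1, ← mul_assoc, ← mul_assoc, qc_mul_self hs, one_mul]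
          rfl
      _ = qc F s * gaussSum (qc F) χ := by rw [← Finset.mul_sum, hb]
  rw [h2, h3, add_zero]

private lemma sum_chi_quad (hF2 : ringChar F ≠ 2) (χ : AddChar F ℂ) (hχ : χ ≠ 1) {s : F}
    (hs : s ≠ 0) (c : F) :
    ∑ t : F, χ (s * t ^ 2 + c * t) =
      χ (-c ^ 2 * (4 * s)⁻¹) * (qc F s * gaussSum (qc F) χ) := by
  have h2 : (2 : F) ≠ 0 := Ring.two_ne_zero hF2
  have key : ∀ u : F, s * (u - c * (2 * s)⁻¹) ^ 2 + c * (u - c * (2 * s)⁻¹) =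
      -c ^ 2 * (4 * s)⁻¹ + s * u ^ 2 := by
    intro u
    have h4 : (4 : F) = 2 * 2 := by norm_num
    field_simp [h4]
    ring
  calc ∑ t : F, χ (s * t ^ 2 + c * t)
      = ∑ u : F, χ (s * (u - c * (2 * s)⁻¹) ^ 2 + c * (u - c * (2 * s)⁻¹)) :=
        (Equiv.sum_comp (Equiv.subRight (c * (2 * s)⁻¹))
          (fun t => χ (s * t ^ 2 + c * t))).symm
    _ = ∑ u : F, χ (-c ^ 2 * (4 * s)⁻¹) * χ (s * u ^ 2) := by
        refine Finset.sum_congr rfl fun u _ => ?_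
        rw [key u, map_add_eq_mul]
    _ = χ (-c ^ 2 * (4 * s)⁻¹) * (qc F s * gaussSum (qc F) χ) := by
        rw [← Finset.mul_sum, sum_chi_sq hF2 χ hχ hs]

private lemma sum_chi_multi (hF2 : ringChar F ≠ 2) (χ : AddChar F ℂ) (hχ : χ ≠ 1) {s : F}
    (hs : s ≠ 0) {n : ℕ} (m : Fin n → F) :
    ∑ y : Fin n → F, χ (s * nrm y + dotP m y) =
      χ (-(nrm m) * (4 * s)⁻¹) * (qc F s * gaussSum (qc F) χ) ^ n := by
  have hsplit : ∀ y : Fin n → F, s * nrm y + dotP m y =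
      ∑ i, (s * (y i) ^ 2 + m i * y i) := by
    intro y
    simp [nrm, dotP, Finset.mul_sum, Finset.sum_add_distrib, pow_two]
  simp_rw [hsplit, addChar_sum]
  rw [← Fintype.prod_sum (fun i (t : F) => χ (s * t ^ 2 + m i * t))]
  have hfac : ∀ i : Fin n, ∑ t : F, χ (s * t ^ 2 + m i * t) =
      χ (-(m i) ^ 2 * (4 * s)⁻¹) * (qc F s * gaussSum (qc F) χ) :=
    fun i => sum_chi_quad hF2 χ hχ hs (m i)
  simp_rw [hfac]
  rw [Finset.prod_mul_distrib, Finset.prod_const, Finset.card_univ, Fintype.card_fin,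
    ← addChar_sum]
  congr 2
  rw [← Finset.sum_mul, nrm, ← Finset.sum_neg_distrib]
  congr 1
  exact Finset.sum_congr rfl fun i _ => by ring

private lemma sum_chi_zero (χ : AddChar F ℂ) (hχ : χ ≠ 1) {n : ℕ} (m : Fin n → F) :
    ∑ y : Fin n → F, χ (dotP m y) =
      if m = 0 then ((Fintype.card F : ℂ)) ^ n else 0 := by
  have hsplit : ∀ y : Fin n → F, dotP m y = ∑ i, m i * y i := fun y => rfl
  simp_rw [hsplit, addChar_sum]
  rw [← Fintype.prod_sum (fun i (t : F) => χ (m i * t))]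
  have hfac : ∀ i : Fin n, ∑ t : F, χ (m i * t) =
      if m i = 0 then (Fintype.card F : ℂ) else 0 := by
    intro i
    simp_rw [mul_comm (m i)]
    rw [AddChar.sum_mulShift (m i) (IsPrimitive.of_ne_one hχ)]
    split <;> simp
  simp_rw [hfac]
  by_cases hm : m = 0
  · subst hm
    simp
  · obtain ⟨i, hi⟩ := Function.ne_iff.mp hm
    have hi' : m i ≠ 0 := by simpa using hi
    rw [if_neg hm]
    exact Finset.prod_eq_zero (mem_univ i) (by simp [hi'])

end Aux

/-- explicit Fourier transform of the zero sphere: for `n = 4k + 2`,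
`q ≡ 3 (mod 4)`, and every `m ∈ 𝔽_q^n`,
`q^{-n} Σ_{y ∈ S₀} χ(m·y) = q^{-1} δ₀(m) - q^{-(n+2)/2} Σ_{r ≠ 0} χ(r‖m‖)`.
Here `(n+2)/2 = 2k + 2`. -/
theorem stmt9 (k : ℕ) (hk : 0 < k)
    (F : Type*) [Field F] [Fintype F] [DecidableEq F]
    (hq : Fintype.card F % 4 = 3)
    (χ : AddChar F ℂ) (hχ : χ ≠ 1)
    (m : Fin (4 * k + 2) → F) :
    ((Fintype.card F : ℂ) ^ (4 * k + 2))⁻¹ *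
        ∑ y ∈ sph F (4 * k + 2) (0 : F), χ (dotP m y) =
      (Fintype.card F : ℂ)⁻¹ * (if m = 0 then 1 else 0) -
        ((Fintype.card F : ℂ) ^ (2 * k + 2))⁻¹ *
          ∑ r ∈ (Finset.univ : Finset F) \ {0}, χ (r * nrm m) := by
  classical
  have hF2 : ringChar F ≠ 2 := by
    intro h
    have := FiniteField.even_card_of_char_two h
    omega
  have hq0 : (Fintype.card F : ℂ) ≠ 0 := Nat.cast_ne_zero.mpr Fintype.card_ne_zero
  set q : ℂ := (Fintype.card F : ℂ) with hqdef
  have hprim := AddChar.IsPrimitive.of_ne_one hχ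
  have h4 : (4 : F) ≠ 0 := by
    have h2 : (2 : F) ≠ 0 := Ring.two_ne_zero hF2
    have : (4 : F) = 2 * 2 := by norm_num
    rw [this]
    exact mul_ne_zero h2 h2
  -- Gauss sum squared
  have hg2 : gaussSum (qc F) χ ^ 2 = -q := by
    rw [gaussSum_sq (qc_ne_one hF2) qc_quad hprim]
    have hsq : ¬ IsSquare (-1 : F) := by
      rw [FiniteField.isSquare_neg_one_iff]
      simpa using hq
    have hneg : quadraticChar F (-1) = -1 := quadraticChar_neg_one_iff_not_isSquare.mpr hsq
    show (Int.castRingHom ℂ) (quadraticChar F (-1)) * _ = _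
    rw [hneg]
    simp
    exact hqdef.symm
  have hgn : (gaussSum (qc F) χ) ^ (4 * k + 2) = -(q ^ (2 * k + 1)) := by
    have he : 4 * k + 2 = (2 * k + 1) * 2 := by ring
    rw [he, pow_mul', hg2, Odd.neg_pow ⟨k, by omega⟩]
  set T : ℂ := ∑ r ∈ (Finset.univ : Finset F) \ {0}, χ (r * nrm m) with hT
  set S : ℂ := ∑ y ∈ sph F (4 * k + 2) (0 : F), χ (dotP m y) with hSdef
  set d : ℂ := if m = 0 then (1 : ℂ) else 0 with hd
  have key : q * S = q ^ (4 * k + 2) * d + -(q ^ (2 * k + 1)) * T := by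
    have lhs : ∑ s : F, ∑ y : Fin (4 * k + 2) → F, χ (s * nrm y + dotP m y) = q * S := by
      rw [Finset.sum_comm]
      calc ∑ y : Fin (4 * k + 2) → F, ∑ s : F, χ (s * nrm y + dotP m y)
          = ∑ y : Fin (4 * k + 2) → F, (∑ s : F, χ (s * nrm y)) * χ (dotP m y) := by
            refine Finset.sum_congr rfl fun y _ => ?_
            rw [Finset.sum_mul]
            exact Finset.sum_congr rfl fun s _ => AddChar.map_add_eq_mul χ _ _
        _ = ∑ y : Fin (4 * k + 2) → F,
              (if nrm y = 0 then q else 0) * χ (dotP m y) := by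
            refine Finset.sum_congr rfl fun y _ => ?_
            rw [AddChar.sum_mulShift (nrm y) hprim]
            by_cases h : nrm y = 0 <;> simp [h, hqdef]
        _ = ∑ y ∈ Finset.univ.filter (fun y : Fin (4 * k + 2) → F => nrm y = 0),
              q * χ (dotP m y) := by
            rw [Finset.sum_filter]
            refine Finset.sum_congr rfl fun y _ => ?_
            split <;> simp
        _ = q * S := by rw [hSdef, sph, Finset.mul_sum]
    rw [← lhs, Finset.sum_eq_sum_sdiff_singleton_add (mem_univ (0 : F))]
    have hzero : ∑ y : Fin (4 * k + 2) → F, χ ((0 : F) * nrm y + dotP m y) =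
        q ^ (4 * k + 2) * d := by
      simp_rw [zero_mul, zero_add]
      rw [sum_chi_zero χ hχ m, hd]
      split <;> simp [hqdef]
    have hnonzero : ∑ s ∈ (Finset.univ : Finset F) \ {0},
        ∑ y : Fin (4 * k + 2) → F, χ (s * nrm y + dotP m y) = -(q ^ (2 * k + 1)) * T := by
      have hterm : ∀ s ∈ (Finset.univ : Finset F) \ {0},
          ∑ y : Fin (4 * k + 2) → F, χ (s * nrm y + dotP m y) =
            χ (-(nrm m) * (4 * s)⁻¹) * -(q ^ (2 * k + 1)) := by
        intro s hsmem
        have hs : s ≠ 0 := by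
          simpa [Finset.mem_sdiff] using hsmem
        rw [sum_chi_multi hF2 χ hχ hs m, mul_pow, hgn]
        have : (qc F s) ^ (4 * k + 2) = 1 := by
          have he : 4 * k + 2 = 2 * (2 * k + 1) := by ring
          rw [he, pow_mul, sq, qc_mul_self hs, one_pow]
        rw [this, one_mul]
      rw [Finset.sum_congr rfl hterm, ← Finset.sum_mul, mul_comm]
      congr 1
      rw [hT]
      refine Finset.sum_nbij' (fun s => -(4 * s)⁻¹) (fun r => -(4 * r)⁻¹) ?_ ?_ ?_ ?_ ?_
      · intro a ha
        have ha0 : a ≠ 0 := by simpa [Finset.mem_sdiff] using ha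
        simp [Finset.mem_sdiff, inv_eq_zero, h4, ha0]
      · intro a ha
        have ha0 : a ≠ 0 := by simpa [Finset.mem_sdiff] using ha
        simp [Finset.mem_sdiff, inv_eq_zero, h4, ha0]
      · intro a ha
        have ha0 : a ≠ 0 := by simpa [Finset.mem_sdiff] using ha
        field_simp
      · intro a ha
        have ha0 : a ≠ 0 := by simpa [Finset.mem_sdiff] using ha
        field_simp
      · intro a ha
        congr 1
        ring
    rw [hzero, hnonzero]
    ring
  -- final algebra
  have hSval : S = q⁻¹ * (q ^ (4 * k + 2) * d + -(q ^ (2 * k + 1)) * T) := by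
    rw [← key, inv_mul_cancel_left₀ hq0]
  rw [hSval]
  field_simp
  ring
end

section
/- Let n ≡ 2 (mod 4), let q ≡ 3 (mod 4) be a prime power, and let X ⊆ 𝔽_q^n. Then the number of pairs at zero distance satisfies #{(x, y) ∈ X × X : ||x − y|| = 0} ≤ |X|²/q + q^{(n−2)/2} |X|. -/
open Finset

section Aux

variable {F : Type*} [Field F] [Fintype F] [DecidableEq F]

/-- The quadratic character of `F` with values in `ℂ`. -/
noncomputable def etaC (F : Type*) [Field F] [Fintype F] [DecidableEq F] : MulChar F ℂ :=
  (quadraticChar F).ringHomComp (Int.castRingHom ℂ)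

lemma addChar_map_sum {A M : Type*} [AddCommMonoid A] [CommMonoid M] (ψ : AddChar A M)
    {ι : Type*} (s : Finset ι) (f : ι → A) :
    ψ (∑ i ∈ s, f i) = ∏ i ∈ s, ψ (f i) := by
  induction s using Finset.cons_induction with
  | empty => simp
  | cons a s ha ih => rw [Finset.sum_cons, Finset.prod_cons, AddChar.map_add_eq_mul, ih]

lemma etaC_sq (hF2 : ringChar F ≠ 2) {t : F} (ht : t ≠ 0) : etaC F t * etaC F t = 1 := by
  have h := quadraticChar_sq_one (F := F) ht
  have : etaC F t * etaC F t = ((quadraticChar F t ^ 2 : ℤ) : ℂ) := by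
    simp [etaC, sq]
  rw [this, h]; norm_num

lemma gauss_A1 (hF2 : ringChar F ≠ 2) (ψ : AddChar F ℂ) (hψ : ψ.IsPrimitive)
    {t : F} (ht : t ≠ 0) :
    ∑ v : F, ψ (t * v ^ 2) = etaC F t * gaussSum (etaC F) ψ := by
  have fib : ∑ v : F, ψ (t * v ^ 2)
      = ∑ u : F, ∑ v ∈ Finset.univ.filter (fun v : F => v ^ 2 = u), ψ (t * v ^ 2) :=
    (Finset.sum_fiberwise Finset.univ (fun v : F => v ^ 2) (fun v => ψ (t * v ^ 2))).symm
  rw [fib]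
  have inner : ∀ u : F, ∑ v ∈ Finset.univ.filter (fun v : F => v ^ 2 = u), ψ (t * v ^ 2)
      = (etaC F u + 1) * ψ (t * u) := by
    intro u
    have h1 : ∑ v ∈ Finset.univ.filter (fun v : F => v ^ 2 = u), ψ (t * v ^ 2)
        = ((Finset.univ.filter (fun v : F => v ^ 2 = u)).card : ℂ) * ψ (t * u) := by
      rw [Finset.sum_congr rfl (fun v hv => by
        rw [(Finset.mem_filter.mp hv).2]), Finset.sum_const, nsmul_eq_mul]
    rw [h1]
    have h2 := quadraticChar_card_sqrts hF2 u
    have h3 : ({x : F | x ^ 2 = u}.toFinset) = Finset.univ.filter (fun v : F => v ^ 2 = u) := by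
      ext x; simp
    rw [h3] at h2
    have : ((Finset.univ.filter (fun v : F => v ^ 2 = u)).card : ℂ)
        = etaC F u + 1 := by
      have := congrArg (fun z : ℤ => (z : ℂ)) h2
      push_cast at this
      simpa [etaC] using this
    rw [this]
  rw [Finset.sum_congr rfl (fun u _ => inner u)]
  have expand : ∑ u : F, (etaC F u + 1) * ψ (t * u)
      = (∑ u : F, etaC F u * ψ (t * u)) + ∑ u : F, ψ (t * u) := by
    rw [← Finset.sum_add_distrib]; congr 1; ext u; ring
  rw [expand]
  have hzero : ∑ u : F, ψ (t * u) = 0 := by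
    have := AddChar.sum_mulShift (R := F) (R' := ℂ) t hψ
    rw [if_neg ht, Nat.cast_zero] at this
    rw [← this]
    exact Finset.sum_congr rfl fun u _ => by rw [mul_comm]
  have hgs : ∑ u : F, etaC F u * ψ (t * u) = gaussSum (etaC F) (AddChar.mulShift ψ t) := by
    unfold gaussSum
    exact Finset.sum_congr rfl fun u _ => by rw [AddChar.mulShift_apply, mul_comm t u]
  rw [hzero, hgs, add_zero]
  have hms := gaussSum_mulShift (etaC F) ψ (Units.mk0 t ht)
  have hms' : etaC F t * gaussSum (etaC F) (AddChar.mulShift ψ t) = gaussSum (etaC F) ψ := by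
    simpa using hms
  calc gaussSum (etaC F) (AddChar.mulShift ψ t)
      = (etaC F t * etaC F t) * gaussSum (etaC F) (AddChar.mulShift ψ t) := by
        rw [etaC_sq hF2 ht, one_mul]
    _ = etaC F t * gaussSum (etaC F) ψ := by rw [mul_assoc, hms']

lemma gauss_A (hF2 : ringChar F ≠ 2) (ψ : AddChar F ℂ) (hψ : ψ.IsPrimitive)
    {t : F} (ht : t ≠ 0) (b : F) :
    ∑ v : F, ψ (t * v ^ 2 + b * v)
      = etaC F t * gaussSum (etaC F) ψ * ψ (-b ^ 2 * (4 * t)⁻¹) := by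
  have h2 : (2 : F) ≠ 0 := Ring.two_ne_zero hF2
  have h4 : (4 : F) ≠ 0 := by
    have : (4 : F) = 2 * 2 := by norm_num
    rw [this]; exact mul_ne_zero h2 h2
  set c := b * (2 * t)⁻¹ with hc
  have key : ∀ v : F, t * v ^ 2 + b * v = t * (v + c) ^ 2 + -b ^ 2 * (4 * t)⁻¹ := by
    intro v
    rw [hc]
    field_simp
    ring
  calc ∑ v : F, ψ (t * v ^ 2 + b * v)
      = ∑ v : F, ψ (t * (v + c) ^ 2) * ψ (-b ^ 2 * (4 * t)⁻¹) := by
        refine Finset.sum_congr rfl fun v _ => ?_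
        rw [key v, AddChar.map_add_eq_mul]
    _ = (∑ v : F, ψ (t * (v + c) ^ 2)) * ψ (-b ^ 2 * (4 * t)⁻¹) := by
        rw [← Finset.sum_mul]
    _ = (∑ w : F, ψ (t * w ^ 2)) * ψ (-b ^ 2 * (4 * t)⁻¹) := by
        congr 1
        exact Fintype.sum_equiv (Equiv.addRight c) _ _ (fun v => rfl)
    _ = etaC F t * gaussSum (etaC F) ψ * ψ (-b ^ 2 * (4 * t)⁻¹) := by
        rw [gauss_A1 hF2 ψ hψ ht]

end Aux

section Vec

variable {F : Type*} [Field F] [Fintype F] [DecidableEq F] {n : ℕ}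

lemma nrm_dot_split (a : F) (z m : Fin n → F) :
    a * nrm m + dotP z m = ∑ i, (a * m i ^ 2 + z i * m i) := by
  unfold nrm dotP
  rw [Finset.mul_sum, ← Finset.sum_add_distrib]
  congr 1; ext i; ring

lemma gauss_B (hF2 : ringChar F ≠ 2) (ψ : AddChar F ℂ) (hψ : ψ.IsPrimitive)
    {t : F} (ht : t ≠ 0) (z : Fin n → F) :
    ∑ m : Fin n → F, ψ (-(4 * t)⁻¹ * nrm m + dotP z m)
      = (etaC F (-(4 * t)⁻¹) * gaussSum (etaC F) ψ) ^ n * ψ (t * nrm z) := by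
  have h2 : (2 : F) ≠ 0 := Ring.two_ne_zero hF2
  have h4 : (4 : F) ≠ 0 := by
    have h : (4 : F) = 2 * 2 := by norm_num
    rw [h]; exact mul_ne_zero h2 h2
  set a : F := -(4 * t)⁻¹ with ha
  have haz : a ≠ 0 := by
    rw [ha]
    exact neg_ne_zero.mpr (inv_ne_zero (mul_ne_zero h4 ht))
  have hinv : ∀ s : F, -s ^ 2 * (4 * a)⁻¹ = t * s ^ 2 := by
    intro s
    rw [ha]
    field_simp
  calc ∑ m : Fin n → F, ψ (a * nrm m + dotP z m)
      = ∑ m : Fin n → F, ∏ i, ψ (a * m i ^ 2 + z i * m i) := by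
        refine Finset.sum_congr rfl fun m _ => ?_
        rw [nrm_dot_split, addChar_map_sum]
    _ = ∏ i, ∑ u : F, ψ (a * u ^ 2 + z i * u) :=
        (Fintype.prod_sum (fun i u => ψ (a * u ^ 2 + z i * u))).symm
    _ = ∏ i, etaC F a * gaussSum (etaC F) ψ * ψ (t * z i ^ 2) := by
        refine Finset.prod_congr rfl fun i _ => ?_
        rw [gauss_A hF2 ψ hψ haz (z i), hinv (z i)]
    _ = (etaC F a * gaussSum (etaC F) ψ) ^ n * ∏ i, ψ (t * z i ^ 2) := by
        rw [Finset.prod_mul_distrib, Finset.prod_const, Finset.card_univ, Fintype.card_fin]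
    _ = (etaC F a * gaussSum (etaC F) ψ) ^ n * ψ (t * nrm z) := by
        congr 1
        rw [← addChar_map_sum]
        congr 1
        unfold nrm
        rw [Finset.mul_sum]
        congr 1; ext i; ring

lemma orth_vec (ψ : AddChar F ℂ) (hψ : ψ.IsPrimitive) (z : Fin n → F) :
    ∑ m : Fin n → F, ψ (dotP z m) = if z = 0 then ((Fintype.card F : ℂ)) ^ n else 0 := by
  have h1 : ∀ m : Fin n → F, ψ (dotP z m) = ∏ i, ψ (z i * m i) := by
    intro m; unfold dotP; rw [addChar_map_sum]
  simp_rw [h1]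
  rw [show (∑ m : Fin n → F, ∏ i, ψ (z i * m i)) = ∏ i, ∑ u : F, ψ (z i * u) from
    (Fintype.prod_sum (fun i u => ψ (z i * u))).symm]
  have inner : ∀ i, ∑ u : F, ψ (z i * u) = if z i = 0 then (Fintype.card F : ℂ) else 0 := by
    intro i
    have h := AddChar.sum_mulShift (z i) hψ
    rw [show (∑ u : F, ψ (z i * u)) = ∑ u : F, ψ (u * z i) from
      Finset.sum_congr rfl fun u _ => by rw [mul_comm], h]
    split_ifs <;> simp
  simp_rw [inner]
  by_cases hz : z = 0
  · simp [hz]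
  · obtain ⟨i, hi⟩ : ∃ i, z i ≠ 0 := by
      by_contra h; push_neg at h; exact hz (funext h)
    rw [if_neg hz]
    exact Finset.prod_eq_zero (Finset.mem_univ i) (by rw [if_neg hi])

end Vec

/-- for `n ≡ 2 (mod 4)`, `q ≡ 3 (mod 4)` and `X ⊆ 𝔽_q^n`,
`#{(x,y) ∈ X² : ‖x-y‖ = 0} ≤ |X|²/q + q^{(n-2)/2} |X|`. -/
theorem stmt11 (n : ℕ) (hn : n % 4 = 2)
    (F : Type*) [Field F] [Fintype F] [DecidableEq F]
    (hq : Fintype.card F % 4 = 3)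
    (X : Finset (Fin n → F)) :
    ((((X ×ˢ X).filter fun p => nrm (p.1 - p.2) = 0).card : ℝ)) ≤
      (X.card : ℝ) ^ 2 / (Fintype.card F : ℝ) +
        (Fintype.card F : ℝ) ^ (((n : ℝ) - 2) / 2) * (X.card : ℝ) := by
  have hq1 : 1 < Fintype.card F := Fintype.one_lt_card
  set q : ℕ := Fintype.card F with hqdef
  have hmod : q % 4 % 2 = q % 2 := Nat.mod_mod_of_dvd q (by norm_num)
  have hodd : q % 2 = 1 := by omega
  have hF2 : ringChar F ≠ 2 := by
    intro h
    have := FiniteField.even_card_of_char_two h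
    omega
  have hcharpos : 0 < ringChar F :=
    Nat.pos_of_ne_zero (CharP.ringChar_ne_zero_of_finite F)
  set ψ := AddChar.FiniteField.primitiveChar_to_Complex F with hψdef
  have hψ : ψ.IsPrimitive := AddChar.FiniteField.primitiveChar_to_Complex_isPrimitive F
  set g := gaussSum (etaC F) ψ with hgdef
  have hη1 : etaC F ≠ 1 := by
    obtain ⟨a, ha⟩ := quadraticChar_exists_neg_one' hF2
    intro h
    have h1 : etaC F (a : F) = 1 := by rw [h]; exact MulChar.one_apply_coe a
    have h2 : etaC F (a : F) = -1 := by simp [etaC, ha]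
    rw [h1] at h2; norm_num at h2
  have hηq : (etaC F).IsQuadratic := (quadraticChar_isQuadratic F).comp _
  have hηm1 : etaC F (-1) = -1 := by
    have h := quadraticChar_neg_one hF2
    have h2 : ZMod.χ₄ (Fintype.card F : ℕ) = -1 := ZMod.χ₄_nat_three_mod_four hq
    simp [etaC, h.trans h2]
  have hg2 : g ^ 2 = -(q : ℂ) := by
    rw [hgdef, gaussSum_sq hη1 hηq hψ, hηm1, neg_one_mul]
  obtain ⟨k, hk⟩ : ∃ k, n = 4 * k + 2 := ⟨n / 4, by omega⟩
  set m2 : ℕ := 2 * k + 1 with hm2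
  have hn2 : n = 2 * m2 := by omega
  have hgn : g ^ n = -(q : ℂ) ^ m2 := by
    rw [hn2, pow_mul, hg2, neg_pow, Odd.neg_one_pow ⟨k, by omega⟩]
    ring
  have hqC : (q : ℂ) ≠ 0 := Nat.cast_ne_zero.mpr (by omega)
  have hgn0 : g ^ n ≠ 0 := by
    rw [hgn]
    exact neg_ne_zero.mpr (pow_ne_zero _ hqC)
  have hetan : ∀ {a : F}, a ≠ 0 → (etaC F a) ^ n = 1 := by
    intro a ha
    rcases hηq a with h | h | h
    · exfalso
      apply ha
      have h0 : ((quadraticChar F a : ℤ) : ℂ) = 0 := by simpa [etaC] using h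
      have h1 : quadraticChar F a = 0 := by exact_mod_cast h0
      exact quadraticChar_eq_zero_iff.mp h1
    · rw [h, one_pow]
    · rw [h, hn2, pow_mul, neg_one_sq, one_pow]
  set T : (Fin n → F) → ℂ := fun m => ∑ x ∈ X, ψ (dotP x m) with hT
  have hconj : ∀ c : F, (starRingEnd ℂ) (ψ c) = ψ (-c) := by
    intro c
    rw [AddChar.starComp_apply hcharpos, AddChar.inv_apply]
  have hTconj : ∀ m, (starRingEnd ℂ) (T m) = ∑ y ∈ X, ψ (-(dotP y m)) := by
    intro m
    rw [hT, map_sum]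
    exact Finset.sum_congr rfl fun y _ => hconj _
  set f : F → ℂ := fun t => ∑ p ∈ X ×ˢ X, ψ (t * nrm (p.1 - p.2)) with hf
  set N : ℕ := ((X ×ˢ X).filter fun p => nrm (p.1 - p.2) = 0).card with hN
  -- Step 1: orthogonality in t
  have step1 : ∑ t : F, f t = (q : ℂ) * N := by
    rw [hf, Finset.sum_comm]
    have h1 : ∀ p ∈ X ×ˢ X, ∑ t : F, ψ (t * nrm (p.1 - p.2))
        = if nrm (p.1 - p.2) = 0 then (q : ℂ) else 0 := by
      intro p _
      have h := AddChar.sum_mulShift (nrm (p.1 - p.2)) hψ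
      rw [h]
      split_ifs <;> simp [hqdef]
    rw [Finset.sum_congr rfl h1, ← Finset.sum_filter, Finset.sum_const, ← hN]
    simp [mul_comm]
  -- Step 2: Gauss sum expansion for t ≠ 0
  have step2 : ∀ t : F, t ≠ 0 → f t = (g ^ n)⁻¹ *
      ∑ m : Fin n → F, ψ (-(4 * t)⁻¹ * nrm m) * (T m * (starRingEnd ℂ) (T m)) := by
    intro t ht
    have h2 : (2 : F) ≠ 0 := Ring.two_ne_zero hF2
    have h4 : (4 : F) ≠ 0 := by
      have h : (4 : F) = 2 * 2 := by norm_num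
      rw [h]; exact mul_ne_zero h2 h2
    have ha : -(4 * t)⁻¹ ≠ 0 := neg_ne_zero.mpr (inv_ne_zero (mul_ne_zero h4 ht))
    have key : ∀ p : (Fin n → F) × (Fin n → F), p ∈ X ×ˢ X → ψ (t * nrm (p.1 - p.2))
        = (g ^ n)⁻¹ * ∑ m : Fin n → F, ψ (-(4 * t)⁻¹ * nrm m + dotP (p.1 - p.2) m) := by
      intro p _
      have hB := gauss_B hF2 ψ hψ ht (p.1 - p.2)
      rw [mul_pow, hetan ha, one_mul] at hB
      rw [hB, inv_mul_cancel_left₀ hgn0]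
    rw [show f t = ∑ p ∈ X ×ˢ X, ψ (t * nrm (p.1 - p.2)) from rfl,
      Finset.sum_congr rfl key, ← Finset.mul_sum, Finset.sum_comm]
    congr 1
    refine Finset.sum_congr rfl fun m _ => ?_
    have hsplit : ∀ p : (Fin n → F) × (Fin n → F),
        ψ (-(4 * t)⁻¹ * nrm m + dotP (p.1 - p.2) m)
          = ψ (-(4 * t)⁻¹ * nrm m) * (ψ (dotP p.1 m) * ψ (-(dotP p.2 m))) := by
      intro p
      have hd : dotP (p.1 - p.2) m = dotP p.1 m + -(dotP p.2 m) := by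
        unfold dotP
        rw [← sub_eq_add_neg, ← Finset.sum_sub_distrib]
        refine Finset.sum_congr rfl fun i _ => ?_
        simp [Pi.sub_apply, sub_mul]
      rw [hd, AddChar.map_add_eq_mul, AddChar.map_add_eq_mul]
    rw [Finset.sum_congr rfl fun p _ => hsplit p, ← Finset.mul_sum]
    congr 1
    rw [hTconj m, hT, Finset.sum_mul_sum, Finset.sum_product]
  -- Step 3: sum over nonzero t of the Gaussian weight
  have step3 : ∀ c : F, ∑ t ∈ Finset.univ.erase (0 : F), ψ (-(4 * t)⁻¹ * c)
      = (if c = 0 then (q : ℂ) else 0) - 1 := by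
    intro c
    have h2 : (2 : F) ≠ 0 := Ring.two_ne_zero hF2
    have h4 : (4 : F) ≠ 0 := by
      have h : (4 : F) = 2 * 2 := by norm_num
      rw [h]; exact mul_ne_zero h2 h2
    have hmem : ∀ t : F, t ∈ Finset.univ.erase (0 : F) → -(4 * t)⁻¹ ∈ Finset.univ.erase (0 : F) := by
      intro t htmem
      rw [Finset.mem_erase] at htmem ⊢
      exact ⟨neg_ne_zero.mpr (inv_ne_zero (mul_ne_zero h4 htmem.1)), Finset.mem_univ _⟩
    have hinvol : ∀ t : F, t ∈ Finset.univ.erase (0 : F) → -(4 * -(4 * t)⁻¹)⁻¹ = t := by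
      intro t htmem
      rw [Finset.mem_erase] at htmem
      field_simp
    have hbij : ∑ t ∈ Finset.univ.erase (0 : F), ψ (-(4 * t)⁻¹ * c)
        = ∑ s ∈ Finset.univ.erase (0 : F), ψ (s * c) :=
      Finset.sum_nbij' (fun t => -(4 * t)⁻¹) (fun s => -(4 * s)⁻¹) hmem hmem hinvol hinvol
        (fun t _ => rfl)
    rw [hbij]
    have hsplit : ∑ s ∈ Finset.univ.erase (0 : F), ψ (s * c)
        = (∑ s : F, ψ (s * c)) - ψ ((0 : F) * c) := by
      rw [← Finset.sum_erase_add Finset.univ _ (Finset.mem_univ (0 : F))]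
      ring
    rw [hsplit, AddChar.sum_mulShift c hψ]
    split_ifs <;> simp [hqdef]
  -- combine the t-sum
  have hsplit0 : ∑ t : F, f t = f 0 + ∑ t ∈ Finset.univ.erase (0 : F), f t :=
    (Finset.add_sum_erase Finset.univ f (Finset.mem_univ (0 : F))).symm
  have hf0 : f 0 = ((X.card : ℂ)) ^ 2 := by
    rw [hf]
    simp [Finset.sum_const, Finset.card_product, sq]
  have hsum_t : ∑ t ∈ Finset.univ.erase (0 : F), f t
      = (g ^ n)⁻¹ * ∑ m : Fin n → F,
          ((if nrm m = 0 then (q : ℂ) else 0) - 1) * (T m * (starRingEnd ℂ) (T m)) := by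
    rw [Finset.sum_congr rfl fun t ht => step2 t (Finset.mem_erase.mp ht).1, ← Finset.mul_sum]
    congr 1
    rw [Finset.sum_comm]
    refine Finset.sum_congr rfl fun m _ => ?_
    rw [← Finset.sum_mul, step3 (nrm m)]
  -- Plancherel
  have hplan : ∑ m : Fin n → F, (T m * (starRingEnd ℂ) (T m)) = (q : ℂ) ^ n * X.card := by
    have h1 : ∀ m : Fin n → F, T m * (starRingEnd ℂ) (T m)
        = ∑ p ∈ X ×ˢ X, ψ (dotP (p.1 - p.2) m) := by
      intro m
      rw [hT, hTconj m, Finset.sum_mul_sum, Finset.sum_product]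
      refine Finset.sum_congr rfl fun x _ => Finset.sum_congr rfl fun y _ => ?_
      have hd : dotP (x - y) m = dotP x m + -(dotP y m) := by
        unfold dotP
        rw [← sub_eq_add_neg, ← Finset.sum_sub_distrib]
        refine Finset.sum_congr rfl fun i _ => ?_
        simp [Pi.sub_apply, sub_mul]
      rw [hd, AddChar.map_add_eq_mul]
    rw [Finset.sum_congr rfl fun m _ => h1 m, Finset.sum_comm]
    rw [Finset.sum_congr rfl fun p _ => orth_vec ψ hψ (p.1 - p.2)]
    have h2 : ∀ p : (Fin n → F) × (Fin n → F), p ∈ X ×ˢ X →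
        (if p.1 - p.2 = 0 then ((q : ℂ)) ^ n else 0)
          = if p.1 = p.2 then ((q : ℂ)) ^ n else 0 := by
      intro p _
      simp [sub_eq_zero]
    rw [Finset.sum_congr rfl h2, Finset.sum_product]
    have h3 : ∀ x ∈ X, (∑ y ∈ X, if x = y then ((q : ℂ)) ^ n else 0) = ((q : ℂ)) ^ n := by
      intro x hx
      rw [Finset.sum_ite_eq X x fun _ => ((q : ℂ)) ^ n]
      exact if_pos hx
    rw [Finset.sum_congr rfl h3, Finset.sum_const, nsmul_eq_mul]
    ring
  -- the real quantity
  set S0 : ℝ := ∑ m ∈ Finset.univ.filter (fun m : Fin n → F => nrm m = 0),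
    Complex.normSq (T m) with hS0
  have hS0nn : 0 ≤ S0 := Finset.sum_nonneg fun m _ => Complex.normSq_nonneg _
  have hexpand : ∑ m : Fin n → F,
      ((if nrm m = 0 then (q : ℂ) else 0) - 1) * (T m * (starRingEnd ℂ) (T m))
      = (q : ℂ) * (S0 : ℂ) - (q : ℂ) ^ n * X.card := by
    have h1 : ∀ m : Fin n → F,
        ((if nrm m = 0 then (q : ℂ) else 0) - 1) * (T m * (starRingEnd ℂ) (T m))
        = (if nrm m = 0 then (q : ℂ) * (T m * (starRingEnd ℂ) (T m)) else 0)
            - T m * (starRingEnd ℂ) (T m) := by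
      intro m
      split_ifs <;> ring
    rw [Finset.sum_congr rfl fun m _ => h1 m, Finset.sum_sub_distrib, hplan,
      ← Finset.sum_filter]
    congr 1
    have h2 : (S0 : ℂ) = ∑ m ∈ Finset.univ.filter (fun m : Fin n → F => nrm m = 0),
        (T m * (starRingEnd ℂ) (T m)) := by
      rw [hS0]
      push_cast
      exact Finset.sum_congr rfl fun m _ => (Complex.mul_conj (T m)).symm
    rw [h2, Finset.mul_sum]
  -- the complex identity
  have hC : (q : ℂ) * N = (X.card : ℂ) ^ 2
      + ((q : ℂ) ^ m2 * X.card - (q : ℂ) * ((q : ℂ) ^ m2)⁻¹ * (S0 : ℂ)) := by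
    have h := step1
    rw [hsplit0, hf0, hsum_t, hexpand, hgn] at h
    rw [← h]
    have hqm : ((q : ℂ) ^ m2) ≠ 0 := pow_ne_zero _ hqC
    have hqn : (q : ℂ) ^ n = (q : ℂ) ^ m2 * (q : ℂ) ^ m2 := by
      rw [hn2, two_mul, pow_add]
    rw [hqn]
    field_simp
    ring
  -- to the reals
  have hR : (q : ℝ) * N = (X.card : ℝ) ^ 2
      + ((q : ℝ) ^ m2 * X.card - (q : ℝ) * ((q : ℝ) ^ m2)⁻¹ * S0) := by
    have := hC
    rw [show ((q : ℂ) * N : ℂ) = ((q * N : ℝ) : ℂ) by push_cast; ring,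
      show ((X.card : ℂ) ^ 2 + ((q : ℂ) ^ m2 * X.card - (q : ℂ) * ((q : ℂ) ^ m2)⁻¹ * (S0 : ℂ)) : ℂ)
        = (((X.card : ℝ) ^ 2 + ((q : ℝ) ^ m2 * X.card - (q : ℝ) * ((q : ℝ) ^ m2)⁻¹ * S0) : ℝ) : ℂ)
        by push_cast; ring] at this
    exact_mod_cast this
  -- final inequality
  have hq0 : (0 : ℝ) < q := by positivity
  have hqm0 : (0 : ℝ) < (q : ℝ) ^ m2 := by positivity
  have hle : (q : ℝ) * N ≤ (X.card : ℝ) ^ 2 + (q : ℝ) ^ m2 * X.card := by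
    rw [hR]
    have : 0 ≤ (q : ℝ) * ((q : ℝ) ^ m2)⁻¹ * S0 := by positivity
    linarith
  have hexp : ((n : ℝ) - 2) / 2 = ((2 * k : ℕ) : ℝ) := by
    rw [hk]; push_cast; ring
  rw [hexp, Real.rpow_natCast]
  have hNle : (N : ℝ) ≤ ((X.card : ℝ) ^ 2 + (q : ℝ) ^ m2 * X.card) / q := by
    rw [le_div_iff₀ hq0]
    linarith [hle]
  calc (N : ℝ) ≤ ((X.card : ℝ) ^ 2 + (q : ℝ) ^ m2 * X.card) / q := hNle
    _ = (X.card : ℝ) ^ 2 / q + (q : ℝ) ^ (2 * k) * X.card := by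
        rw [hm2, pow_succ]
        field_simp
        ring
end

section
/- Let n ≡ 2 (mod 4), let q ≡ 3 (mod 4) be a prime power, and let X ⊆ 𝔽_q^n. Then #{(x, y, z) ∈ X³ : ||x − y|| = ||z − y|| = 0} ≤ |X|³/q + q^{(n−2)/2} |X|². -/
open Finset

set_option linter.unusedSectionVars false

namespace Stmt12Aux

variable {F : Type*} [Field F] [Fintype F] [DecidableEq F]

noncomputable def qc (F : Type*) [Field F] [Fintype F] [DecidableEq F] : MulChar F ℂ :=
  (quadraticChar F).ringHomComp (Int.castRingHom ℂ)

lemma qc_sq {c : F} (hc : c ≠ 0) : qc F c * qc F c = 1 := by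
  have h1 : ((qc F) ^ 2) c = 1 := by
    unfold qc
    rw [((quadraticChar_isQuadratic F).comp (Int.castRingHom ℂ)).sq_eq_one]
    exact MulChar.one_apply (isUnit_iff_ne_zero.mpr hc)
  rw [MulChar.pow_apply' _ two_ne_zero] at h1
  rw [← sq]; exact h1

lemma sum_psi_sq (hF : ringChar F ≠ 2) {ψ : AddChar F ℂ} (hψ : ψ.IsPrimitive)
    {c : F} (hc : c ≠ 0) :
    ∑ u : F, ψ (c * (u * u)) = qc F c * gaussSum (qc F) ψ := by
  have step1 : ∑ u : F, ψ (c * (u * u)) =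
      ∑ t : F, ((quadraticChar F t : ℂ) + 1) * ψ (c * t) := by
    have h1 : ∀ u : F, ψ (c * (u * u)) = ∑ t : F, if u * u = t then ψ (c * t) else 0 := by
      intro u
      rw [Finset.sum_ite_eq]
      simp
    simp_rw [h1]
    rw [Finset.sum_comm]
    refine Finset.sum_congr rfl fun t _ => ?_
    rw [← Finset.sum_filter, Finset.sum_const]
    have hcard : ((univ.filter fun u : F => u * u = t).card : ℂ)
        = (quadraticChar F t : ℂ) + 1 := by
      have h2 := quadraticChar_card_sqrts hF t
      rw [Set.toFinset_setOf] at h2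
      have h3 : (univ.filter fun u : F => u * u = t) = univ.filter fun x : F => x ^ 2 = t := by
        simp [sq]
    -- cast h2 : (card : ℤ) = χ t + 1 to ℂ
      rw [h3]
      exact_mod_cast congrArg (fun z : ℤ => (z : ℂ)) h2
    rw [nsmul_eq_mul, hcard]
  rw [step1]
  have step2 : ∑ t : F, ((quadraticChar F t : ℂ) + 1) * ψ (c * t)
      = (∑ t : F, qc F t * ψ (c * t)) + ∑ t : F, ψ (t * c) := by
    rw [← Finset.sum_add_distrib]
    refine Finset.sum_congr rfl fun t _ => ?_
    rw [mul_comm t c]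
    have : qc F t = (quadraticChar F t : ℂ) := rfl
    rw [this]; ring
  rw [step2, AddChar.sum_mulShift c hψ, if_neg hc]
  have step3 : ∑ t : F, qc F t * ψ (c * t) = gaussSum (qc F) (AddChar.mulShift ψ c) := by
    rw [gaussSum]
    exact Finset.sum_congr rfl fun t _ => by rw [AddChar.mulShift_apply]
  rw [step3]
  have h4 := gaussSum_mulShift (qc F) ψ (Units.mk0 c hc)
  simp only [Units.val_mk0] at h4
  have h5 : qc F c * (qc F c * gaussSum (qc F) (AddChar.mulShift ψ c))
      = qc F c * gaussSum (qc F) ψ := by rw [h4]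
  rw [← mul_assoc, qc_sq hc, one_mul] at h5
  rw [h5]
  ring

end Stmt12Aux

namespace Stmt12Aux

variable {F : Type*} [Field F] [Fintype F] [DecidableEq F]

lemma psi_map_sum {ι : Type*} (ψ : AddChar F ℂ) (s : Finset ι) (f : ι → F) :
    ψ (∑ i ∈ s, f i) = ∏ i ∈ s, ψ (f i) := by
  induction s using Finset.cons_induction with
  | empty => simp
  | cons a s ha ih => rw [Finset.sum_cons, Finset.prod_cons, AddChar.map_add_eq_mul, ih]

lemma sum_psi_quad (hF : ringChar F ≠ 2) {ψ : AddChar F ℂ} (hψ : ψ.IsPrimitive)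
    {c : F} (hc : c ≠ 0) (a : F) :
    ∑ u : F, ψ (c * (u * u) + a * u)
      = qc F c * gaussSum (qc F) ψ * ψ (-(a * a) / (4 * c)) := by
  have h2 : (2 : F) ≠ 0 := Ring.two_ne_zero hF
  have h4 : (4 : F) ≠ 0 := by
    have h44 : (4 : F) = 2 * 2 := by norm_num
    rw [h44]; exact mul_ne_zero h2 h2
  have key : ∀ v : F, c * ((v - a/(2*c)) * (v - a/(2*c))) + a * (v - a/(2*c))
      = c * (v * v) + (-(a*a)/(4*c)) := by
    intro v
    field_simp
    ring
  calc ∑ u : F, ψ (c * (u * u) + a * u)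
      = ∑ v : F, ψ (c * ((v - a/(2*c)) * (v - a/(2*c))) + a * (v - a/(2*c))) :=
        Fintype.sum_equiv (Equiv.subRight (a/(2*c))) _ _ (fun v => rfl) |>.symm
    _ = ∑ v : F, ψ (c * (v * v)) * ψ (-(a*a)/(4*c)) := by
        refine Finset.sum_congr rfl fun v _ => ?_
        rw [key v, AddChar.map_add_eq_mul]
    _ = _ := by rw [← Finset.sum_mul, sum_psi_sq hF hψ hc]

lemma sum_psi_quad_vec {n : ℕ} (hF : ringChar F ≠ 2) {ψ : AddChar F ℂ} (hψ : ψ.IsPrimitive)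
    {c : F} (hc : c ≠ 0) (m : Fin n → F) :
    ∑ u : Fin n → F, ψ (c * nrm u + dotP m u)
      = (qc F c * gaussSum (qc F) ψ)^n * ψ (-(nrm m) / (4 * c)) := by
  have h1 : ∀ u : Fin n → F, ψ (c * nrm u + dotP m u)
      = ∏ i, ψ (c * (u i * u i) + m i * u i) := by
    intro u
    rw [← psi_map_sum]
    congr 1
    rw [nrm, dotP, Finset.mul_sum, ← Finset.sum_add_distrib]
  simp_rw [h1]
  have h2 : ∑ u : Fin n → F, ∏ i, ψ (c * (u i * u i) + m i * u i)
      = ∏ i, ∑ x : F, ψ (c * (x * x) + m i * x) := by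
    rw [Finset.prod_univ_sum]
    rw [Fintype.piFinset_univ]
  rw [h2]
  have h3 : ∀ i, ∑ x : F, ψ (c * (x * x) + m i * x)
      = qc F c * gaussSum (qc F) ψ * ψ (-(m i * m i) / (4 * c)) :=
    fun i => sum_psi_quad hF hψ hc (m i)
  simp_rw [h3]
  rw [Finset.prod_mul_distrib, Finset.prod_const]
  have h5 : ∏ i, ψ (-(m i * m i) / (4 * c)) = ψ (-(nrm m) / (4*c)) := by
    rw [← psi_map_sum]
    congr 1
    rw [nrm, ← Finset.sum_div, ← Finset.sum_neg_distrib]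
  rw [h5]
  simp

lemma sum_psi_dot {n : ℕ} {ψ : AddChar F ℂ} (hψ : ψ.IsPrimitive) (w : Fin n → F) :
    ∑ m : Fin n → F, ψ (dotP m w)
      = if w = 0 then ((Fintype.card F : ℂ))^n else 0 := by
  have h1 : ∀ m : Fin n → F, ψ (dotP m w) = ∏ i, ψ (m i * w i) := fun m => by
    rw [dotP, psi_map_sum]
  simp_rw [h1]
  have h2 : ∑ m : Fin n → F, ∏ i, ψ (m i * w i) = ∏ i, ∑ x : F, ψ (x * w i) := by
    rw [Finset.prod_univ_sum, Fintype.piFinset_univ]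
  rw [h2]
  have h3 : ∀ i, ∑ x : F, ψ (x * w i) = if w i = 0 then ((Fintype.card F : ℂ)) else 0 :=
    fun i => by rw [AddChar.sum_mulShift (w i) hψ]; split_ifs <;> simp
  simp_rw [h3]
  by_cases hw : w = 0
  · subst hw; simp
  · rw [if_neg hw]
    obtain ⟨i, hi⟩ : ∃ i, w i ≠ 0 := by
      by_contra h
      push_neg at h
      exact hw (funext h)
    exact Finset.prod_eq_zero (Finset.mem_univ i) (if_neg hi)

end Stmt12Aux

namespace Stmt12Aux

variable {F : Type*} [Field F] [Fintype F] [DecidableEq F]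

lemma four_ne_zero (hF : ringChar F ≠ 2) : (4 : F) ≠ 0 := by
  have h2 : (2 : F) ≠ 0 := Ring.two_ne_zero hF
  have h44 : (4 : F) = 2 * 2 := by norm_num
  rw [h44]; exact mul_ne_zero h2 h2

lemma sum_s_ne_zero {ψ : AddChar F ℂ} (hψ : ψ.IsPrimitive) (hF : ringChar F ≠ 2) (b : F) :
    ∑ s ∈ univ.filter (fun s : F => s ≠ 0), ψ (-b / (4 * s))
      = (if b = 0 then ((Fintype.card F : ℂ)) else 0) - 1 := by
  have h4 : (4 : F) ≠ 0 := four_ne_zero hF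
  have step1 : ∑ s ∈ univ.filter (fun s : F => s ≠ 0), ψ (-b / (4 * s))
      = ∑ r ∈ univ.filter (fun r : F => r ≠ 0), ψ (r * b) := by
    refine Finset.sum_nbij' (fun s => -(4 * s)⁻¹) (fun r => -(4 * r)⁻¹) ?_ ?_ ?_ ?_ ?_
    · intro a ha
      simp only [Finset.mem_filter, Finset.mem_univ, true_and] at ha ⊢
      simp [ha, h4]
    · intro a ha
      simp only [Finset.mem_filter, Finset.mem_univ, true_and] at ha ⊢
      simp [ha, h4]
    · intro a ha
      simp only [Finset.mem_filter, Finset.mem_univ, true_and] at ha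
      field_simp
    · intro a ha
      simp only [Finset.mem_filter, Finset.mem_univ, true_and] at ha
      field_simp
    · intro a ha
      simp only [Finset.mem_filter, Finset.mem_univ, true_and] at ha
      congr 1
      field_simp
  rw [step1]
  have step2 : ∑ r ∈ univ.filter (fun r : F => r ≠ 0), ψ (r * b)
      = (∑ r : F, ψ (r * b)) - ψ (0 * b) := by
    rw [eq_sub_iff_add_eq]
    rw [Finset.sum_filter_add_sum_filter_not univ (fun r : F => r ≠ 0) (fun r => ψ (r * b)) |>.symm]
    congr 1
    have : univ.filter (fun r : F => ¬ r ≠ 0) = {0} := by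
      ext r; simp
    rw [this, Finset.sum_singleton]
  rw [step2, AddChar.sum_mulShift b hψ]
  simp only [zero_mul, AddChar.map_zero_eq_one]
  split_ifs <;> simp

lemma dotP_linear {n : ℕ} (m u x y : Fin n → F) :
    dotP m (u - x + y) = dotP m u - dotP m x + dotP m y := by
  simp only [dotP, Pi.add_apply, Pi.sub_apply, mul_add, mul_sub,
    Finset.sum_add_distrib, Finset.sum_sub_distrib]

lemma plancherel {n : ℕ} {ψ : AddChar F ℂ} (hψ : ψ.IsPrimitive)
    (X : Finset (Fin n → F)) :
    ∑ m : Fin n → F, (∑ x ∈ X, ψ (- dotP m x)) * (∑ y ∈ X, ψ (dotP m y))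
      = ((Fintype.card F : ℂ))^n * X.card := by
  have expand : ∀ m : Fin n → F, (∑ x ∈ X, ψ (- dotP m x)) * (∑ y ∈ X, ψ (dotP m y))
      = ∑ p ∈ X ×ˢ X, ψ (dotP m (p.2 - p.1 + 0)) := by
    intro m
    rw [Finset.sum_mul_sum]
    rw [Finset.sum_product]
    refine Finset.sum_congr rfl fun x _ => Finset.sum_congr rfl fun y _ => ?_
    rw [← AddChar.map_add_eq_mul, dotP_linear]
    congr 1
    have : dotP m (0 : Fin n → F) = 0 := by simp [dotP]
    rw [this]
    ring
  simp_rw [expand]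
  rw [Finset.sum_comm]
  have inner : ∀ p ∈ X ×ˢ X, ∑ m : Fin n → F, ψ (dotP m (p.2 - p.1 + 0))
      = if p.2 - p.1 + 0 = 0 then ((Fintype.card F : ℂ))^n else 0 :=
    fun p _ => sum_psi_dot hψ _
  rw [Finset.sum_congr rfl inner]
  have cond : ∀ p : (Fin n → F) × (Fin n → F), (p.2 - p.1 + 0 = 0) ↔ p.2 = p.1 := by
    intro p; rw [add_zero, sub_eq_zero]
  have : ∑ p ∈ X ×ˢ X, (if p.2 - p.1 + 0 = 0 then ((Fintype.card F : ℂ))^n else 0)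
      = ∑ p ∈ X ×ˢ X, (if p.2 = p.1 then ((Fintype.card F : ℂ))^n else 0) :=
    Finset.sum_congr rfl fun p _ => if_congr (cond p) rfl rfl
  rw [this, Finset.sum_product]
  have inner2 : ∀ x ∈ X, (∑ y ∈ X, if y = x then ((Fintype.card F : ℂ))^n else 0)
      = ((Fintype.card F : ℂ))^n := by
    intro x hx
    rw [Finset.sum_ite_eq' X x (fun _ => ((Fintype.card F : ℂ))^n), if_pos hx]
  rw [Finset.sum_congr rfl inner2, Finset.sum_const, nsmul_eq_mul]
  ring

end Stmt12Aux

namespace Stmt12Aux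

variable {F : Type*} [Field F] [Fintype F] [DecidableEq F]

lemma key_T {n k : ℕ} (hnk : n = 2 * k) (hF : ringChar F ≠ 2)
    {ψ : AddChar F ℂ} (hψ : ψ.IsPrimitive)
    {s : F} (hs : s ≠ 0) (X : Finset (Fin n → F)) :
    (gaussSum (qc F) ψ)^n *
        ∑ m : Fin n → F, ψ (-(nrm m) / (4 * s)) *
          ((∑ x ∈ X, ψ (- dotP m x)) * (∑ y ∈ X, ψ (dotP m y)))
      = ((Fintype.card F : ℂ))^n * ∑ p ∈ X ×ˢ X, ψ (s * nrm (p.1 - p.2)) := by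
  have hqc : (qc F s * gaussSum (qc F) ψ)^n = (gaussSum (qc F) ψ)^n := by
    rw [mul_pow, hnk, pow_mul, pow_two, qc_sq hs, one_pow, one_mul]
  have comb : ∀ (m x y u : Fin n → F),
      ψ (s * nrm u + dotP m u) * (ψ (-dotP m x) * ψ (dotP m y))
        = ψ (s * nrm u) * ψ (dotP m (u - x + y)) := by
    intro m x y u
    rw [dotP_linear, sub_eq_add_neg (dotP m u), AddChar.map_add_eq_mul,
      AddChar.map_add_eq_mul, AddChar.map_add_eq_mul]
    ring
  have cond : ∀ (x y u : Fin n → F), (u - x + y = 0) ↔ u = x - y := by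
    intro x y u
    rw [sub_add_eq_add_sub, sub_eq_zero, eq_sub_iff_add_eq]
  calc (gaussSum (qc F) ψ)^n *
        ∑ m : Fin n → F, ψ (-(nrm m) / (4 * s)) *
          ((∑ x ∈ X, ψ (- dotP m x)) * (∑ y ∈ X, ψ (dotP m y)))
      = ∑ m : Fin n → F, (∑ u : Fin n → F, ψ (s * nrm u + dotP m u)) *
          ((∑ x ∈ X, ψ (- dotP m x)) * (∑ y ∈ X, ψ (dotP m y))) := by
        rw [Finset.mul_sum]
        refine Finset.sum_congr rfl fun m _ => ?_
        rw [sum_psi_quad_vec hF hψ hs m, hqc]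
        ring
    _ = ∑ m : Fin n → F, ∑ x ∈ X, ∑ y ∈ X, ∑ u : Fin n → F,
          ψ (s * nrm u + dotP m u) * (ψ (-dotP m x) * ψ (dotP m y)) := by
        refine Finset.sum_congr rfl fun m _ => ?_
        rw [Finset.sum_mul_sum X X (fun x => ψ (-dotP m x)) (fun y => ψ (dotP m y))]
        rw [Finset.mul_sum]
        refine Finset.sum_congr rfl fun x _ => ?_
        rw [Finset.mul_sum]
        refine Finset.sum_congr rfl fun y _ => ?_
        rw [Finset.sum_mul]
    _ = ∑ x ∈ X, ∑ y ∈ X, ∑ u : Fin n → F, ∑ m : Fin n → F,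
          ψ (s * nrm u + dotP m u) * (ψ (-dotP m x) * ψ (dotP m y)) := by
        rw [Finset.sum_comm]
        refine Finset.sum_congr rfl fun x _ => ?_
        rw [Finset.sum_comm]
        refine Finset.sum_congr rfl fun y _ => ?_
        rw [Finset.sum_comm]
    _ = ∑ x ∈ X, ∑ y ∈ X, ∑ u : Fin n → F,
          ψ (s * nrm u) * (if u - x + y = 0 then ((Fintype.card F : ℂ))^n else 0) := by
        refine Finset.sum_congr rfl fun x _ => Finset.sum_congr rfl fun y _ =>
          Finset.sum_congr rfl fun u _ => ?_
        simp_rw [comb]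
        rw [← Finset.mul_sum, sum_psi_dot hψ]
    _ = ∑ x ∈ X, ∑ y ∈ X, ψ (s * nrm (x - y)) * ((Fintype.card F : ℂ))^n := by
        refine Finset.sum_congr rfl fun x _ => Finset.sum_congr rfl fun y _ => ?_
        have h1 : ∀ u : Fin n → F,
            ψ (s * nrm u) * (if u - x + y = 0 then ((Fintype.card F : ℂ))^n else 0)
            = if u = x - y then ψ (s * nrm u) * ((Fintype.card F : ℂ))^n else 0 := by
          intro u
          rw [if_congr (cond x y u) rfl rfl, mul_ite, mul_zero]
        simp_rw [h1]
        rw [Finset.sum_ite_eq' univ (x - y) (fun u => ψ (s * nrm u) * ((Fintype.card F : ℂ))^n),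
          if_pos (Finset.mem_univ _)]
    _ = ((Fintype.card F : ℂ))^n * ∑ p ∈ X ×ˢ X, ψ (s * nrm (p.1 - p.2)) := by
        rw [Finset.sum_product, Finset.mul_sum]
        refine Finset.sum_congr rfl fun x _ => ?_
        rw [Finset.mul_sum]
        refine Finset.sum_congr rfl fun y _ => ?_
        ring

end Stmt12Aux

namespace Stmt12Aux

variable {F : Type*} [Field F] [Fintype F] [DecidableEq F]

lemma pair_bound {n k : ℕ} (hnk : n = 2 * k) (hk : Odd k)
    (hq : Fintype.card F % 4 = 3) (X : Finset (Fin n → F)) :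
    (((X ×ˢ X).filter fun p => nrm (p.1 - p.2) = 0).card : ℝ) * (Fintype.card F : ℝ)
      ≤ (X.card : ℝ)^2 + (Fintype.card F : ℝ)^k * X.card := by
  classical
  have hF : ringChar F ≠ 2 := by
    intro h
    have h2 := FiniteField.even_card_of_char_two h
    omega
  set ψ : AddChar F ℂ := AddChar.FiniteField.primitiveChar_to_Complex F with hψdef
  have hψ : ψ.IsPrimitive := AddChar.FiniteField.primitiveChar_to_Complex_isPrimitive F
  set g : ℂ := gaussSum (qc F) ψ with hgdef
  set q : ℕ := Fintype.card F with hqdef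
  have hqc1 : qc F ≠ 1 :=
    (MulChar.ringHomComp_ne_one_iff Int.cast_injective).mpr (quadraticChar_ne_one hF)
  have hquad : (qc F).IsQuadratic := (quadraticChar_isQuadratic F).comp _
  have hg2 : g^2 = -(q : ℂ) := by
    rw [hgdef, gaussSum_sq hqc1 hquad hψ]
    have h1 : quadraticChar F (-1) = -1 := by
      rw [quadraticChar_neg_one hF]
      exact ZMod.χ₄_nat_three_mod_four hq
    have h2 : qc F (-1) = ((quadraticChar F (-1) : ℤ) : ℂ) := rfl
    rw [h2, h1]
    push_cast
    ring
  have hgn : g^n = -(q:ℂ)^k := by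
    rw [hnk, pow_mul, hg2, Odd.neg_pow hk]
  -- notation
  set P : ℕ := ((X ×ˢ X).filter fun p => nrm (p.1 - p.2) = 0).card with hPdef
  have E1 : ∑ s : F, ∑ p ∈ X ×ˢ X, ψ (s * nrm (p.1 - p.2)) = (q:ℂ) * P := by
    rw [Finset.sum_comm]
    have h1 : ∀ p ∈ X ×ˢ X, ∑ s : F, ψ (s * nrm (p.1 - p.2))
        = if nrm (p.1 - p.2) = 0 then (q:ℂ) else 0 := by
      intro p _
      rw [AddChar.sum_mulShift _ hψ]
      split_ifs <;> simp [hqdef]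
    rw [Finset.sum_congr rfl h1, ← Finset.sum_filter, Finset.sum_const, nsmul_eq_mul]
    rw [← hPdef]
    ring
  have hsplit : ∑ s : F, ∑ p ∈ X ×ˢ X, ψ (s * nrm (p.1 - p.2))
      = (∑ p ∈ X ×ˢ X, ψ (0 * nrm (p.1 - p.2)))
        + ∑ s ∈ univ.filter (fun s : F => s ≠ 0), ∑ p ∈ X ×ˢ X, ψ (s * nrm (p.1 - p.2)) := by
    rw [Finset.filter_ne' univ 0]
    exact (Finset.add_sum_erase univ _ (Finset.mem_univ 0)).symm
  have E3 : ∑ p ∈ X ×ˢ X, ψ (0 * nrm (p.1 - p.2)) = ((X.card : ℂ))^2 := by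
    have h1 : ∀ p ∈ X ×ˢ X, ψ (0 * nrm (p.1 - p.2)) = 1 := by
      intro p _
      rw [zero_mul, AddChar.map_zero_eq_one]
    rw [Finset.sum_congr rfl h1, Finset.sum_const, Finset.card_product, nsmul_eq_mul]
    push_cast
    ring
  have E4 : (q:ℂ)^n * ∑ s ∈ univ.filter (fun s : F => s ≠ 0),
        ∑ p ∈ X ×ˢ X, ψ (s * nrm (p.1 - p.2))
      = g^n * ∑ m : Fin n → F,
          ((∑ x ∈ X, ψ (- dotP m x)) * (∑ y ∈ X, ψ (dotP m y)))
            * ((if nrm m = 0 then (q:ℂ) else 0) - 1) := by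
    rw [Finset.mul_sum]
    have h1 : ∀ s ∈ univ.filter (fun s : F => s ≠ 0),
        (q:ℂ)^n * ∑ p ∈ X ×ˢ X, ψ (s * nrm (p.1 - p.2))
        = g^n * ∑ m : Fin n → F, ψ (-(nrm m) / (4 * s)) *
            ((∑ x ∈ X, ψ (- dotP m x)) * (∑ y ∈ X, ψ (dotP m y))) := by
      intro s hs
      exact (key_T hnk hF hψ (Finset.mem_filter.mp hs).2 X).symm
    rw [Finset.sum_congr rfl h1, ← Finset.mul_sum]
    congr 1
    rw [Finset.sum_comm]
    refine Finset.sum_congr rfl fun m _ => ?_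
    have h2 : ∀ s ∈ univ.filter (fun s : F => s ≠ 0),
        ψ (-(nrm m) / (4 * s)) * ((∑ x ∈ X, ψ (- dotP m x)) * (∑ y ∈ X, ψ (dotP m y)))
        = ((∑ x ∈ X, ψ (- dotP m x)) * (∑ y ∈ X, ψ (dotP m y))) * ψ (-(nrm m) / (4 * s)) := by
      intro s _; ring
    rw [Finset.sum_congr rfl h2, ← Finset.mul_sum, sum_s_ne_zero hψ hF (nrm m)]
  have E5 : ∑ m : Fin n → F,
        ((∑ x ∈ X, ψ (- dotP m x)) * (∑ y ∈ X, ψ (dotP m y)))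
          * ((if nrm m = 0 then (q:ℂ) else 0) - 1)
      = (q:ℂ) * (∑ m ∈ univ.filter (fun m : Fin n → F => nrm m = 0),
            (∑ x ∈ X, ψ (- dotP m x)) * (∑ y ∈ X, ψ (dotP m y)))
        - (q:ℂ)^n * X.card := by
    have h1 : ∀ m : Fin n → F,
        ((∑ x ∈ X, ψ (- dotP m x)) * (∑ y ∈ X, ψ (dotP m y)))
          * ((if nrm m = 0 then (q:ℂ) else 0) - 1)
        = (if nrm m = 0 then ((∑ x ∈ X, ψ (- dotP m x)) * (∑ y ∈ X, ψ (dotP m y))) * (q:ℂ) else 0)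
          - ((∑ x ∈ X, ψ (- dotP m x)) * (∑ y ∈ X, ψ (dotP m y))) := by
      intro m
      split_ifs <;> ring
    rw [Finset.sum_congr rfl (fun m _ => h1 m), Finset.sum_sub_distrib,
      ← Finset.sum_filter, plancherel hψ X, ← Finset.sum_mul, ← hqdef]
    ring
  -- main complex identity
  have main : (q:ℂ)^(n+1) * P
      = (q:ℂ)^n * ((X.card : ℂ))^2 + (q:ℂ)^(n+k) * X.card
        - (q:ℂ)^(k+1) * (∑ m ∈ univ.filter (fun m : Fin n → F => nrm m = 0),
            (∑ x ∈ X, ψ (- dotP m x)) * (∑ y ∈ X, ψ (dotP m y))) := by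
    have h1 : (q:ℂ)^(n+1) * P = (q:ℂ)^n * ((q:ℂ) * P) := by ring
    rw [h1, ← E1, hsplit, mul_add, E4, E5, hgn, E3, pow_add]
    ring
  -- realness
  have hW : ∀ m : Fin n → F,
      (∑ x ∈ X, ψ (- dotP m x)) * (∑ y ∈ X, ψ (dotP m y))
      = ((Complex.normSq (∑ y ∈ X, ψ (dotP m y)) : ℝ) : ℂ) := by
    intro m
    have hconj : (∑ x ∈ X, ψ (- dotP m x)) = (starRingEnd ℂ) (∑ y ∈ X, ψ (dotP m y)) := by
      rw [map_sum]
      exact Finset.sum_congr rfl fun x _ => (AddChar.map_neg_eq_conj ψ (dotP m x))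
    rw [hconj, mul_comm, Complex.mul_conj]
  set R0 : ℝ := ∑ m ∈ univ.filter (fun m : Fin n → F => nrm m = 0),
      Complex.normSq (∑ y ∈ X, ψ (dotP m y)) with hR0def
  have hSig : (∑ m ∈ univ.filter (fun m : Fin n → F => nrm m = 0),
      (∑ x ∈ X, ψ (- dotP m x)) * (∑ y ∈ X, ψ (dotP m y))) = ((R0 : ℝ) : ℂ) := by
    rw [Finset.sum_congr rfl (fun m _ => hW m), hR0def, Complex.ofReal_sum]
  rw [hSig] at main
  have hR0nonneg : 0 ≤ R0 := Finset.sum_nonneg fun m _ => Complex.normSq_nonneg _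
  -- to real
  have mainR : (q:ℝ)^(n+1) * P
      = (q:ℝ)^n * ((X.card : ℝ))^2 + (q:ℝ)^(n+k) * X.card - (q:ℝ)^(k+1) * R0 := by
    have := main
    exact_mod_cast this
  have hq0 : 0 < (q:ℝ) := by
    have := Fintype.card_pos (α := F)
    rw [hqdef]
    exact_mod_cast this
  have hqn : (0:ℝ) < (q:ℝ)^n := pow_pos hq0 n
  have h2 : (q:ℝ)^(n+1) * P ≤ (q:ℝ)^n * ((X.card : ℝ))^2 + (q:ℝ)^(n+k) * X.card := by
    have h3 : 0 ≤ (q:ℝ)^(k+1) * R0 := mul_nonneg (le_of_lt (pow_pos hq0 (k+1))) hR0nonneg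
    linarith
  rw [pow_succ, pow_add] at h2
  nlinarith [h2, hqn]

end Stmt12Aux


/-- for `n ≡ 2 (mod 4)`, `q ≡ 3 (mod 4)` and `X ⊆ 𝔽_q^n`,
`#{(x,y,z) ∈ X³ : ‖x-y‖ = ‖z-y‖ = 0} ≤ |X|³/q + q^{(n-2)/2} |X|²`. -/
theorem stmt12 (n : ℕ) (hn : n % 4 = 2)
    (F : Type*) [Field F] [Fintype F] [DecidableEq F]
    (hq : Fintype.card F % 4 = 3)
    (X : Finset (Fin n → F)) :
    ((((X ×ˢ X ×ˢ X).filter fun t =>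
        nrm (t.1 - t.2.1) = 0 ∧ nrm (t.2.2 - t.2.1) = 0).card : ℝ)) ≤
      (X.card : ℝ) ^ 3 / (Fintype.card F : ℝ) +
        (Fintype.card F : ℝ) ^ (((n : ℝ) - 2) / 2) * (X.card : ℝ) ^ 2 := by

  classical
  set k : ℕ := n / 2 with hkdef
  have hnk : n = 2 * k := by omega
  have hk : Odd k := by
    refine ⟨(n - 2) / 4, by omega⟩
  have hk1 : 1 ≤ k := by omega
  set P : ℕ := ((X ×ˢ X).filter fun p => nrm (p.1 - p.2) = 0).card with hPdef
  -- combinatorial step: triple count ≤ |X| * P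
  have hcard : ((X ×ˢ X ×ˢ X).filter fun t =>
        nrm (t.1 - t.2.1) = 0 ∧ nrm (t.2.2 - t.2.1) = 0).card ≤ X.card * P := by
    have hinj : (((X ×ˢ X ×ˢ X).filter fun t =>
        nrm (t.1 - t.2.1) = 0 ∧ nrm (t.2.2 - t.2.1) = 0)).card
        ≤ (X ×ˢ ((X ×ˢ X).filter fun p => nrm (p.1 - p.2) = 0)).card := by
      apply Finset.card_le_card_of_injOn (fun t => (t.2.2, (t.1, t.2.1)))
      · intro t ht
        simp only [Finset.mem_coe, Finset.mem_filter, Finset.mem_product] at ht ⊢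
        exact ⟨ht.1.2.2, ⟨⟨ht.1.1, ht.1.2.1⟩, ht.2.1⟩⟩
      · intro a _ b _ hab
        simp only [Prod.mk.injEq] at hab
        obtain ⟨h1, h2, h3⟩ := hab
        exact Prod.ext h2 (Prod.ext h3 h1)
    rwa [Finset.card_product] at hinj
  -- analytic step
  have hpair := Stmt12Aux.pair_bound hnk hk hq X
  rw [← hPdef] at hpair
  -- exponent rewriting
  have hexp : (Fintype.card F : ℝ) ^ (((n : ℝ) - 2) / 2) = (Fintype.card F : ℝ) ^ (k - 1 : ℕ) := by
    have h1 : ((n : ℝ) - 2) / 2 = ((k - 1 : ℕ) : ℝ) := by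
      rw [Nat.cast_sub hk1]
      have : (n : ℝ) = 2 * k := by exact_mod_cast congrArg (Nat.cast : ℕ → ℝ) hnk
      rw [this]
      push_cast
      ring
    rw [h1, Real.rpow_natCast]
  rw [hexp]
  set Q : ℝ := (Fintype.card F : ℝ) with hQdef
  have hQ : 0 < Q := by
    rw [hQdef]
    exact_mod_cast Fintype.card_pos
  set Xc : ℝ := (X.card : ℝ) with hXcdef
  have hXc : 0 ≤ Xc := by exact Nat.cast_nonneg _
  have hN : (((X ×ˢ X ×ˢ X).filter fun t =>
        nrm (t.1 - t.2.1) = 0 ∧ nrm (t.2.2 - t.2.1) = 0).card : ℝ) ≤ Xc * P := by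
    rw [hXcdef]
    exact_mod_cast hcard
  have hpow : Q ^ k = Q ^ (k - 1) * Q := by
    rw [← pow_succ]
    congr 1
    omega
  have key : (((X ×ˢ X ×ˢ X).filter fun t =>
        nrm (t.1 - t.2.1) = 0 ∧ nrm (t.2.2 - t.2.1) = 0).card : ℝ) * Q
      ≤ Xc^3 + Q^(k-1) * Xc^2 * Q := by
    have h1 := mul_le_mul_of_nonneg_left hpair hXc
    have h2 := mul_le_mul_of_nonneg_right hN (le_of_lt hQ)
    nlinarith [h1, h2]
  have hfin := (le_div_iff₀ hQ).mpr key
  have heq : (Xc^3 + Q^(k-1) * Xc^2 * Q)/Q = Xc^3/Q + Q^(k-1) * Xc^2 := by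
    field_simp
  rw [heq] at hfin
  exact hfin
end

section
/- Let q be an odd prime power and d ≥ 2. Let x, y, z ∈ P_d ⊆ 𝔽_q^d, and write x̄ := (x_1, …, x_{d−1}) ∈ 𝔽_q^{d−1} for the projection onto the first d − 1 coordinates (similarly ȳ, z̄). Assume ||x̄|| ≠ 0. Then x·y = x·z if and only if || −x̄/(2||x̄||) − ȳ || = || −x̄/(2||x̄||) − z̄ ||. -/
open Finset

lemma stmt15_aux (F : Type*) [Field F] (h2 : (2 : F) ≠ 0) (k : ℕ)
    (x y z : Fin (k + 1) → F)
    (hx : x (Fin.last k) = ∑ i : Fin k, x i.castSucc * x i.castSucc)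
    (hy : y (Fin.last k) = ∑ i : Fin k, y i.castSucc * y i.castSucc)
    (hz : z (Fin.last k) = ∑ i : Fin k, z i.castSucc * z i.castSucc)
    (hnx : (∑ i : Fin k, x i.castSucc * x i.castSucc) ≠ 0) :
    ((∑ i : Fin (k + 1), x i * y i) = (∑ i : Fin (k + 1), x i * z i) ↔
      (∑ i : Fin k, (-x i.castSucc / (2 * ∑ j : Fin k, x j.castSucc * x j.castSucc)
          - y i.castSucc) * (-x i.castSucc / (2 * ∑ j : Fin k, x j.castSucc * x j.castSucc)
          - y i.castSucc)) =
      (∑ i : Fin k, (-x i.castSucc / (2 * ∑ j : Fin k, x j.castSucc * x j.castSucc)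
          - z i.castSucc) * (-x i.castSucc / (2 * ∑ j : Fin k, x j.castSucc * x j.castSucc)
          - z i.castSucc))) := by
  set a := ∑ i : Fin k, x i.castSucc * x i.castSucc with ha
  have h4 : (4 : F) * a ^ 2 ≠ 0 := by
    have : (4 : F) = 2 * 2 := by norm_num
    rw [this]
    exact mul_ne_zero (mul_ne_zero h2 h2) (pow_ne_zero 2 hnx)
  have key : ∀ w : Fin (k + 1) → F,
      (∑ i : Fin k, (-x i.castSucc / (2 * a) - w i.castSucc) *
        (-x i.castSucc / (2 * a) - w i.castSucc)) =
      (a + 4 * a * (∑ i : Fin k, x i.castSucc * w i.castSucc)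
        + 4 * a ^ 2 * (∑ i : Fin k, w i.castSucc * w i.castSucc)) / (4 * a ^ 2) := by
    intro w
    rw [eq_div_iff h4, Finset.sum_mul]
    have hterm : ∀ i ∈ Finset.univ (α := Fin k),
        (-x i.castSucc / (2 * a) - w i.castSucc) *
          (-x i.castSucc / (2 * a) - w i.castSucc) * (4 * a ^ 2) =
        x i.castSucc * x i.castSucc + 4 * a * (x i.castSucc * w i.castSucc)
          + 4 * a ^ 2 * (w i.castSucc * w i.castSucc) := by
      intro i _
      field_simp
      ring
    rw [Finset.sum_congr rfl hterm, Finset.sum_add_distrib, Finset.sum_add_distrib,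
      ← Finset.mul_sum, ← Finset.mul_sum]
  rw [Fin.sum_univ_castSucc (f := fun i => x i * y i),
    Fin.sum_univ_castSucc (f := fun i => x i * z i), key y, key z, hx, hy, hz,
    div_left_inj' h4]
  constructor
  · intro h
    linear_combination 4 * a * h
  · intro h
    have h4a : (4 : F) * a ≠ 0 := by
      intro hh
      exact h4 (by rw [sq]; linear_combination a * hh)
    have h' : (4 * a) * (∑ i : Fin k, x i.castSucc * y i.castSucc
          + a * ∑ i : Fin k, y i.castSucc * y i.castSucc)
        = (4 * a) * (∑ i : Fin k, x i.castSucc * z i.castSucc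
          + a * ∑ i : Fin k, z i.castSucc * z i.castSucc) := by
      linear_combination h
    exact mul_left_cancel₀ h4a h'


/-- for `x, y, z` on the paraboloid `P_d ⊆ 𝔽_q^d` (`q` odd) with
`‖x̄‖ ≠ 0`, one has `x·y = x·z` iff
`‖-x̄/(2‖x̄‖) - ȳ‖ = ‖-x̄/(2‖x̄‖) - z̄‖`, where `x̄` denotes the projection to the
first `d-1` coordinates. -/
theorem stmt15 (F : Type*) [Field F] [Fintype F] [DecidableEq F]
    (hodd : Odd (Fintype.card F))
    (d : ℕ) (hd : 2 ≤ d) (x y z : Fin d → F)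
    (hx : x ⟨d - 1, by omega⟩ = nrm fun i : Fin (d - 1) => x (Fin.castLE (by omega) i))
    (hy : y ⟨d - 1, by omega⟩ = nrm fun i : Fin (d - 1) => y (Fin.castLE (by omega) i))
    (hz : z ⟨d - 1, by omega⟩ = nrm fun i : Fin (d - 1) => z (Fin.castLE (by omega) i))
    (hnx : (nrm fun i : Fin (d - 1) => x (Fin.castLE (by omega) i)) ≠ 0) :
    (dotP x y = dotP x z ↔
      (nrm fun i : Fin (d - 1) =>
          -(x (Fin.castLE (by omega) i)) /
              (2 * nrm fun j : Fin (d - 1) => x (Fin.castLE (by omega) j)) -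
            y (Fin.castLE (by omega) i)) =
      (nrm fun i : Fin (d - 1) =>
          -(x (Fin.castLE (by omega) i)) /
              (2 * nrm fun j : Fin (d - 1) => x (Fin.castLE (by omega) j)) -
            z (Fin.castLE (by omega) i))) := by
  have h2 : (2 : F) ≠ 0 := by
    intro h
    have hc : ringChar F = 2 :=
      CharP.ringChar_of_prime_eq_zero Nat.prime_two (by exact_mod_cast h)
    have := FiniteField.even_card_of_char_two hc
    rcases hodd with ⟨m, hm⟩; omega
  obtain ⟨k, rfl⟩ : ∃ k, d = k + 1 := ⟨d - 1, by omega⟩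
  exact stmt15_aux F h2 k x y z hx hy hz hnx
end

section
/- Let q be a prime power and d ≥ 3. Let S ⊆ 𝔽_q^{d−2} be a set that is totally isotropic, i.e. s·s' = 0 for all s, s' ∈ S, and let A ⊆ 𝔽_q \ {0} be closed under multiplication. Define E := {(s_1, …, s_{d−2}, x, x²) : s ∈ S, x ∈ A} ⊆ 𝔽_q^d. Then E ⊆ P_d, |E| = |S| · |A|, and ∏(E) ⊆ {a + a² : a ∈ A}; in particular |∏(E)| ≤ |A|. -/
open Finset

lemma aux_eval {F : Type*} [CommRing F] {n : ℕ} (s : Fin n → F) (a : F)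
    (x : Fin (n+2) → F)
    (hx : x = fun (i : Fin (n+2)) =>
      if h : (i : ℕ) < n then s ⟨(i:ℕ), h⟩ else if (i:ℕ) = n then a else a ^ 2) :
    (∀ i : Fin n, x (Fin.castLE (by omega) i) = s i) ∧
    x ⟨n, by omega⟩ = a ∧ x ⟨n+1, by omega⟩ = a ^ 2 := by
  subst hx
  refine ⟨fun i => ?_, ?_, ?_⟩
  · simp [i.isLt]
  · simp
  · have h1 : ¬ (n + 1 < n) := by omega
    have h2 : ¬ (n + 1 = n) := by omega
    simp [h1, h2]

lemma aux_sum {F : Type*} [CommRing F] (n : ℕ) (f : Fin (n+2) → F) :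
    ∑ i, f i = (∑ i : Fin n, f (Fin.castLE (by omega) i)) + f ⟨n, by omega⟩
      + f ⟨n+1, by omega⟩ := by
  rw [Fin.sum_univ_castSucc, Fin.sum_univ_castSucc]
  rfl

lemma aux_p1 {F : Type*} [CommRing F] {n : ℕ} (s : Fin n → F) (a : F)
    (hss : ∑ i, s i * s i = 0) (x : Fin (n+2) → F)
    (hx : x = fun (i : Fin (n+2)) =>
      if h : (i : ℕ) < n then s ⟨(i:ℕ), h⟩ else if (i:ℕ) = n then a else a ^ 2) :
    x ⟨n+1, by omega⟩ = ∑ i : Fin (n+1), x (Fin.castLE (by omega) i) ^ 2 := by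
  obtain ⟨h1, h2, h3⟩ := aux_eval s a x hx
  rw [h3, Fin.sum_univ_castSucc]
  have e1 : ∀ i : Fin n,
      x (Fin.castLE (by omega) (Fin.castSucc i)) = s i := by
    intro i
    have : (Fin.castLE (by omega) (Fin.castSucc i) : Fin (n+2)) =
        Fin.castLE (by omega) i := by ext; simp
    rw [this]; exact h1 i
  have e2 : x (Fin.castLE (by omega : n + 1 ≤ n + 2) (Fin.last n)) = a := by
    have : (Fin.castLE (by omega : n + 1 ≤ n + 2) (Fin.last n)) =
        (⟨n, by omega⟩ : Fin (n+2)) := by ext; simp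
    rw [this]; exact h2
  rw [e2]
  have : ∑ i : Fin n, x (Fin.castLE (by omega) (Fin.castSucc i)) ^ 2
      = ∑ i : Fin n, s i * s i := by
    apply Finset.sum_congr rfl
    intro i _
    rw [e1 i, sq]
  rw [this, hss, zero_add, sq]

lemma aux_p3 {F : Type*} [CommRing F] {n : ℕ} (s s' : Fin n → F) (a b : F)
    (h0 : dotP s s' = 0) (x y : Fin (n+2) → F)
    (hx : x = fun (i : Fin (n+2)) =>
      if h : (i : ℕ) < n then s ⟨(i:ℕ), h⟩ else if (i:ℕ) = n then a else a ^ 2)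
    (hy : y = fun (i : Fin (n+2)) =>
      if h : (i : ℕ) < n then s' ⟨(i:ℕ), h⟩ else if (i:ℕ) = n then b else b ^ 2) :
    dotP x y = a * b + (a * b) ^ 2 := by
  obtain ⟨h1, h2, h3⟩ := aux_eval s a x hx
  obtain ⟨g1, g2, g3⟩ := aux_eval s' b y hy
  rw [dotP, aux_sum n (fun i => x i * y i), h2, h3, g2, g3]
  have : ∑ i : Fin n, x (Fin.castLE (by omega) i) * y (Fin.castLE (by omega) i)
      = dotP s s' := by
    apply Finset.sum_congr rfl
    intro i _
    rw [h1 i, g1 i]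
  rw [this, h0]
  ring

/-- construction: if `S ⊆ 𝔽_q^{d-2}` is totally isotropic and
`A ⊆ 𝔽_q \ {0}` is closed under multiplication, then
`E = {(s, x, x²) : s ∈ S, x ∈ A}` satisfies `E ⊆ P_d`, `|E| = |S||A|`,
`∏(E) ⊆ {a + a² : a ∈ A}`, and in particular `|∏(E)| ≤ |A|`. -/
theorem stmt16 (F : Type*) [Field F] [Fintype F] [DecidableEq F]
    (d : ℕ) (hd : 3 ≤ d)
    (S : Finset (Fin (d - 2) → F)) (hS : ∀ s ∈ S, ∀ s' ∈ S, dotP s s' = 0)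
    (A : Finset F) (hA0 : (0 : F) ∉ A) (hAmul : ∀ a ∈ A, ∀ b ∈ A, a * b ∈ A)
    (E : Finset (Fin d → F))
    (hE : E = (S ×ˢ A).image fun p (i : Fin d) =>
      if h : (i : ℕ) < d - 2 then p.1 ⟨(i : ℕ), h⟩
      else if (i : ℕ) = d - 2 then p.2 else p.2 ^ 2) :
    (∀ x ∈ E, x ⟨d - 1, by omega⟩ =
        ∑ i : Fin (d - 1), x (Fin.castLE (by omega) i) ^ 2) ∧
      E.card = S.card * A.card ∧
      (∀ t ∈ prodSet E, ∃ a ∈ A, t = a + a ^ 2) ∧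
      (prodSet E).card ≤ A.card := by
  obtain ⟨n, rfl⟩ : ∃ n, d = n + 2 := ⟨d - 2, by omega⟩
  subst hE
  have h3 : ∀ t ∈ prodSet ((S ×ˢ A).image fun p (i : Fin (n+2)) =>
      if h : (i : ℕ) < n + 2 - 2 then p.1 ⟨(i : ℕ), h⟩
      else if (i : ℕ) = n + 2 - 2 then p.2 else p.2 ^ 2),
      ∃ a ∈ A, t = a + a ^ 2 := by
    intro t ht
    simp only [prodSet, mem_image, mem_product] at ht
    obtain ⟨⟨x, y⟩, ⟨hx, hy⟩, rfl⟩ := ht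
    simp only [mem_image, mem_product] at hx hy
    obtain ⟨⟨s, a⟩, ⟨hs, ha⟩, rfl⟩ := hx
    obtain ⟨⟨s', b⟩, ⟨hs', hb⟩, rfl⟩ := hy
    exact ⟨a * b, hAmul a ha b hb,
      aux_p3 (n := n) s s' a b (hS s hs s' hs') _ _ rfl rfl⟩
  refine ⟨?_, ?_, h3, ?_⟩
  · intro x hx
    simp only [mem_image, mem_product] at hx
    obtain ⟨⟨s, a⟩, ⟨hs, ha⟩, rfl⟩ := hx
    have := hS s hs s hs
    rw [dotP] at this
    exact aux_p1 (n := n) s a this _ rfl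
  · rw [Finset.card_image_of_injOn, Finset.card_product]
    intro p _ q _ hpq
    obtain ⟨h1, h2, _⟩ := aux_eval (n := n) p.1 p.2 _ rfl
    obtain ⟨g1, g2, _⟩ := aux_eval (n := n) q.1 q.2 _ rfl
    have hval : ∀ i : Fin (n+2),
        (fun (i : Fin (n+2)) =>
          if h : (i : ℕ) < n + 2 - 2 then p.1 ⟨(i : ℕ), h⟩
          else if (i : ℕ) = n + 2 - 2 then p.2 else p.2 ^ 2) i =
        (fun (i : Fin (n+2)) =>
          if h : (i : ℕ) < n + 2 - 2 then q.1 ⟨(i : ℕ), h⟩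
          else if (i : ℕ) = n + 2 - 2 then q.2 else q.2 ^ 2) i :=
      fun i => congrFun hpq i
    have hp2 : p.2 = q.2 := h2.symm.trans ((hval ⟨n, by omega⟩).trans g2)
    exact Prod.ext (funext fun i =>
      (h1 i).symm.trans ((hval (Fin.castLE (by omega) i)).trans (g1 i))) hp2
  · calc (prodSet _).card ≤ (A.image fun a => a + a ^ 2).card := by
          apply Finset.card_le_card
          intro t ht
          obtain ⟨a, ha, rfl⟩ := h3 t ht
          exact mem_image_of_mem _ ha
        _ ≤ A.card := Finset.card_image_le
end

section
/- Let q be an odd prime power, n ≥ 2, r ∈ 𝔽_q \ {0}, and let X ⊆ 𝔽_q^n. Suppose there is a constant C₁ > 0 such that for every f : S_r → ℂ the extension estimate ( Σ_{c ∈ 𝔽_q^n} | |S_r|^{-1} Σ_{x ∈ S_r} χ(c·x) f(x) |^{(2n+4)/n} )^{n/(2n+4)} ≤ C₁ ( |S_r|^{-1} Σ_{x ∈ S_r} |f(x)|² )^{1/2} holds. Then Σ_{y ∈ X} | Σ_{m ∈ S_r} X̂(m) χ(y·m) |² ≤ C₁² |S_r| · |X|^{2/(n+2)} · Σ_{m ∈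 S_r} |X̂(m)|². -/
open Finset

/-- if the `L² → L^{(2n+4)/n}` extension estimate holds for the sphere
`S_r ⊆ 𝔽_q^n` (`r ≠ 0`) with constant `C₁`, then for any `X ⊆ 𝔽_q^n`,
`Σ_{y ∈ X} |Σ_{m ∈ S_r} X̂(m) χ(y·m)|² ≤ C₁² |S_r| |X|^{2/(n+2)} Σ_{m ∈ S_r} |X̂(m)|²`. -/
theorem stmt17 (F : Type*) [Field F] [Fintype F] [DecidableEq F]
    (hodd : Odd (Fintype.card F))
    (n : ℕ) (hn : 2 ≤ n)
    (χ : AddChar F ℂ) (hχ : χ ≠ 1)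
    (r : F) (hr : r ≠ 0)
    (X : Finset (Fin n → F))
    (C₁ : ℝ) (hC₁ : 0 < C₁)
    (hext : ∀ f : (Fin n → F) → ℂ,
      (∑ w : Fin n → F,
          ‖(((sph F n r).card : ℂ))⁻¹ * ∑ x ∈ sph F n r, χ (dotP w x) * f x‖ ^
            ((2 * (n : ℝ) + 4) / (n : ℝ))) ^ ((n : ℝ) / (2 * (n : ℝ) + 4)) ≤
        C₁ * ((((sph F n r).card : ℝ))⁻¹ * ∑ x ∈ sph F n r, ‖f x‖ ^ 2) ^ ((1 : ℝ) / 2)) :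
    ∑ y ∈ X, ‖∑ m ∈ sph F n r, fourierCoef χ X m * χ (dotP y m)‖ ^ 2 ≤
      C₁ ^ 2 * ((sph F n r).card : ℝ) * (X.card : ℝ) ^ ((2 : ℝ) / ((n : ℝ) + 2)) *
        ∑ m ∈ sph F n r, ‖fourierCoef χ X m‖ ^ 2 := by
  set S := sph F n r with hSdef
  by_cases hS : S = ∅
  · simp [hS]
  have hScard : (0:ℝ) < S.card := by
    have := Finset.card_pos.mpr (Finset.nonempty_of_ne_empty hS)
    exact_mod_cast this
  have hN : (0:ℝ) < (n:ℝ) := by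
    have : 0 < n := lt_of_lt_of_le (by norm_num) hn
    exact_mod_cast this
  set g : (Fin n → F) → ℝ := fun w => ‖∑ m ∈ S, fourierCoef χ X m * χ (dotP w m)‖ with hg
  have hgnn : ∀ w, 0 ≤ g w := fun w => norm_nonneg _
  set P : ℝ := (2 * (n:ℝ) + 4) / (n:ℝ) with hP
  -- the extension estimate applied to f = |S| * X̂
  have hext' : (∑ w : Fin n → F, g w ^ P) ^ ((n:ℝ) / (2 * (n:ℝ) + 4)) ≤
      C₁ * ((S.card : ℝ) * ∑ m ∈ S, ‖fourierCoef χ X m‖ ^ 2) ^ ((1:ℝ)/2) := by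
    have h := hext (fun x => (S.card : ℂ) * fourierCoef χ X x)
    have hc : ((S.card : ℂ)) ≠ 0 := by
      exact_mod_cast ne_of_gt (show (0:ℝ) < S.card from hScard)
    have h1 : ∀ w : Fin n → F,
        ((S.card : ℂ))⁻¹ * ∑ x ∈ S, χ (dotP w x) * ((S.card : ℂ) * fourierCoef χ X x)
          = ∑ m ∈ S, fourierCoef χ X m * χ (dotP w m) := by
      intro w
      rw [Finset.mul_sum]
      refine Finset.sum_congr rfl fun x hx => ?_
      field_simp
    have h2 : ((S.card : ℝ))⁻¹ * ∑ x ∈ S, ‖(S.card : ℂ) * fourierCoef χ X x‖ ^ 2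
        = (S.card : ℝ) * ∑ m ∈ S, ‖fourierCoef χ X m‖ ^ 2 := by
      have : ∀ x : Fin n → F, ‖(S.card : ℂ) * fourierCoef χ X x‖ ^ 2
          = (S.card : ℝ)^2 * ‖fourierCoef χ X x‖ ^ 2 := by
        intro x
        rw [norm_mul, mul_pow]
        norm_num
      simp_rw [this, ← Finset.mul_sum]
      rw [← mul_assoc]
      congr 1
      field_simp
    simp only [h1, h2] at h
    exact h
  -- squared version
  have hsq : (∑ w : Fin n → F, g w ^ P) ^ ((n:ℝ) / ((n:ℝ) + 2)) ≤
      C₁ ^ 2 * ((S.card : ℝ) * ∑ m ∈ S, ‖fourierCoef χ X m‖ ^ 2) := by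
    have hA : (0:ℝ) ≤ ∑ w : Fin n → F, g w ^ P :=
      Finset.sum_nonneg fun w _ => Real.rpow_nonneg (hgnn w) _
    have hB : (0:ℝ) ≤ (S.card : ℝ) * ∑ m ∈ S, ‖fourierCoef χ X m‖ ^ 2 := by
      apply mul_nonneg hScard.le
      exact Finset.sum_nonneg fun m _ => by positivity
    have := pow_le_pow_left₀ (Real.rpow_nonneg hA _) hext' 2
    calc (∑ w : Fin n → F, g w ^ P) ^ ((n:ℝ) / ((n:ℝ) + 2))
        = ((∑ w : Fin n → F, g w ^ P) ^ ((n:ℝ) / (2 * (n:ℝ) + 4))) ^ 2 := by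
          rw [← Real.rpow_natCast ((∑ w : Fin n → F, g w ^ P) ^ ((n:ℝ) / (2 * (n:ℝ) + 4))) 2,
            ← Real.rpow_mul hA]
          congr 1
          field_simp
          ring
      _ ≤ (C₁ * ((S.card : ℝ) * ∑ m ∈ S, ‖fourierCoef χ X m‖ ^ 2) ^ ((1:ℝ)/2)) ^ 2 := this
      _ = C₁ ^ 2 * ((S.card : ℝ) * ∑ m ∈ S, ‖fourierCoef χ X m‖ ^ 2) := by
          rw [mul_pow, ← Real.rpow_natCast (((S.card : ℝ) * ∑ m ∈ S, ‖fourierCoef χ X m‖ ^ 2) ^ ((1:ℝ)/2)) 2,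
            ← Real.rpow_mul hB]
          norm_num
  -- Hölder
  have hpq : Real.HolderConjugate (((n:ℝ)+2)/(n:ℝ)) (((n:ℝ)+2)/2) := by
    refine Real.holderConjugate_iff.mpr ⟨?_, ?_⟩
    · rw [lt_div_iff₀ hN]; linarith
    · rw [inv_div, inv_div]
      field_simp
  have holder : ∑ y ∈ X, g y ^ 2 ≤
      (∑ y ∈ X, g y ^ P) ^ ((n:ℝ)/((n:ℝ)+2)) * (X.card : ℝ) ^ ((2:ℝ)/((n:ℝ)+2)) := by
    have h := Real.inner_le_Lp_mul_Lq_of_nonneg (s := X) hpq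
      (f := fun y => g y ^ 2) (g := fun _ => (1:ℝ))
      (fun y _ => by positivity) (fun y _ => zero_le_one)
    simp only [mul_one, Real.one_rpow, Finset.sum_const, nsmul_eq_mul] at h
    calc ∑ y ∈ X, g y ^ 2 ≤
        (∑ y ∈ X, (g y ^ 2) ^ (((n:ℝ)+2)/(n:ℝ))) ^ (1/(((n:ℝ)+2)/(n:ℝ))) *
          ((X.card : ℝ)) ^ (1/(((n:ℝ)+2)/2)) := h
      _ = (∑ y ∈ X, g y ^ P) ^ ((n:ℝ)/((n:ℝ)+2)) * (X.card : ℝ) ^ ((2:ℝ)/((n:ℝ)+2)) := by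
          rw [one_div_div, one_div_div]
          congr 2
          refine Finset.sum_congr rfl fun y _ => ?_
          rw [← Real.rpow_natCast (g y) 2, ← Real.rpow_mul (hgnn y)]
          congr 1
          rw [hP]
          field_simp
          ring
  -- extend sum to univ
  have hext2 : (∑ y ∈ X, g y ^ P) ^ ((n:ℝ)/((n:ℝ)+2)) ≤
      (∑ w : Fin n → F, g w ^ P) ^ ((n:ℝ)/((n:ℝ)+2)) := by
    apply Real.rpow_le_rpow
    · exact Finset.sum_nonneg fun w _ => Real.rpow_nonneg (hgnn w) _
    · exact Finset.sum_le_sum_of_subset_of_nonneg (Finset.subset_univ X)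
        (fun w _ _ => Real.rpow_nonneg (hgnn w) _)
    · positivity
  calc ∑ y ∈ X, g y ^ 2
      ≤ (∑ y ∈ X, g y ^ P) ^ ((n:ℝ)/((n:ℝ)+2)) * (X.card : ℝ) ^ ((2:ℝ)/((n:ℝ)+2)) := holder
    _ ≤ (∑ w : Fin n → F, g w ^ P) ^ ((n:ℝ)/((n:ℝ)+2)) * (X.card : ℝ) ^ ((2:ℝ)/((n:ℝ)+2)) := by
        apply mul_le_mul_of_nonneg_right hext2 (Real.rpow_nonneg (Nat.cast_nonneg _) _)
    _ ≤ (C₁ ^ 2 * ((S.card : ℝ) * ∑ m ∈ S, ‖fourierCoef χ X m‖ ^ 2)) * (X.card : ℝ) ^ ((2:ℝ)/((n:ℝ)+2)) := by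
        apply mul_le_mul_of_nonneg_right hsq (Real.rpow_nonneg (Nat.cast_nonneg _) _)
    _ = C₁ ^ 2 * (S.card : ℝ) * (X.card : ℝ) ^ ((2:ℝ)/((n:ℝ)+2)) * ∑ m ∈ S, ‖fourierCoef χ X m‖ ^ 2 := by
        ring
end
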